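/- arXiv:1608.05757 — 3 statements merged into one kernel-verified Lean document; each statement's English description precedes it below -/
import Mathlib

section
/- Let f be an ergodic invertible measure-preserving transformation of a probability space (X,μ) and 𝔸 a bounded measurable Banach cocycle over f with upper Lyapunov exponent λ and lower Lyapunov exponent χ. Fix ε > 0. Then for every x ∈ Λ the ε-Lyapunov norms are defined at x, fx and f^{-1}x, and the operator norms with respect to these norms satisfy ‖𝔸_x‖_{fx←x,ε} ≤ e^{λ+ε} and ‖(𝔸_x)^{-1}‖_{f^{-1}x←x,ε} ≤ e^{−χ+ε}. -/
open MeasureTheory Filter Topology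

noncomputable section

/-- The `n`-step cocycle over `f` generated by `A`:
`coc f A n x = A(f^[n-1] x) ∘ ⋯ ∘ A(x)`, `coc f A 0 x = Id`. -/
def coc {X V : Type*} [NormedAddCommGroup V] [NormedSpace ℝ V]
    (f : X → X) (A : X → (V ≃L[ℝ] V)) : ℕ → X → (V ≃L[ℝ] V)
  | 0, _ => ContinuousLinearEquiv.refl ℝ V
  | n + 1, x => (coc f A n x).trans (A (f^[n] x))

/-- `‖𝔸ⁿ_x‖`. -/
def cocNorm {X V : Type*} [NormedAddCommGroup V] [NormedSpace ℝ V]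
    (f : X → X) (A : X → (V ≃L[ℝ] V)) (n : ℕ) (x : X) : ℝ :=
  ‖(coc f A n x : V →L[ℝ] V)‖

/-- `‖(𝔸ⁿ_x)⁻¹‖`. -/
def cocInvNorm {X V : Type*} [NormedAddCommGroup V] [NormedSpace ℝ V]
    (f : X → X) (A : X → (V ≃L[ℝ] V)) (n : ℕ) (x : X) : ℝ :=
  ‖((coc f A n x).symm : V →L[ℝ] V)‖

/-- The cocycle generated by `A` is bounded. -/
def IsBoundedCocycle {X V : Type*} [NormedAddCommGroup V] [NormedSpace ℝ V]
    (A : X → (V ≃L[ℝ] V)) : Prop :=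
  ∃ C : ℝ, ∀ x : X, ‖(A x : V →L[ℝ] V)‖ ≤ C ∧ ‖((A x).symm : V →L[ℝ] V)‖ ≤ C

/-- The cocycle generated by `A` is `α`-Hölder. -/
def IsHolderCocycle {X V : Type*} [MetricSpace X] [NormedAddCommGroup V] [NormedSpace ℝ V]
    (A : X → (V ≃L[ℝ] V)) (α : ℝ) : Prop :=
  ∃ M r : ℝ, 0 < M ∧ 0 < r ∧ ∀ x y : X, dist x y ≤ r →
    ‖(A x : V →L[ℝ] V) - (A y : V →L[ℝ] V)‖
      + ‖((A x).symm : V →L[ℝ] V) - ((A y).symm : V →L[ℝ] V)‖ ≤ M * dist x y ^ α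

/-- The closing property for a map of a metric space. -/
def ClosingProperty {X : Type*} [MetricSpace X] (f : X → X) : Prop :=
  ∃ D γ δ₀ : ℝ, 0 < D ∧ 0 < γ ∧ 0 < δ₀ ∧
    ∀ (x : X) (k : ℕ), 0 < k → dist x (f^[k] x) < δ₀ →
      ∃ p : X, f^[k] p = p ∧ ∀ i ≤ k,
        dist (f^[i] x) (f^[i] p) ≤
          D * dist x (f^[k] x) * Real.exp (-γ * (min i (k - i) : ℕ))

/-- The set `Λ` of regular points: points where `(1/n)log‖𝔸ⁿ_x‖ → lam`,
`(1/n)log‖𝔸ⁿ_{f^{-n}x}‖ → lam` and `(1/n)log‖𝔸^{-n}_x‖ = (1/n)log‖(𝔸ⁿ_{f^{-n}x})⁻¹‖ → -chi`. -/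
def lyapSet {X V : Type*} [NormedAddCommGroup V] [NormedSpace ℝ V]
    (f : X ≃ X) (A : X → (V ≃L[ℝ] V)) (lam chi : ℝ) : Set X :=
  { x | Tendsto (fun n : ℕ => Real.log (cocNorm (⇑f) A n x) / n) atTop (𝓝 lam) ∧
        Tendsto (fun n : ℕ => Real.log (cocNorm (⇑f) A n ((⇑f.symm)^[n] x)) / n) atTop (𝓝 lam) ∧
        Tendsto (fun n : ℕ => Real.log (cocInvNorm (⇑f) A n ((⇑f.symm)^[n] x)) / n)
          atTop (𝓝 (-chi)) }

/-- The `ε`-Lyapunov norm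
`‖u‖_{x,ε} = Σ_{n≥0} ‖𝔸ⁿ_x u‖ e^{-(lam+ε)n} + Σ_{n≥1} ‖𝔸^{-n}_x u‖ e^{(chi-ε)n}`,
where `𝔸^{-n}_x = (𝔸ⁿ_{f^{-n}x})⁻¹`. -/
def lyapNorm {X V : Type*} [NormedAddCommGroup V] [NormedSpace ℝ V]
    (f : X ≃ X) (A : X → (V ≃L[ℝ] V)) (lam chi ε : ℝ) (x : X) (u : V) : ℝ :=
  (∑' n : ℕ, ‖(coc (⇑f) A n x) u‖ * Real.exp (-(lam + ε) * n)) +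
  (∑' n : ℕ, ‖((coc (⇑f) A (n + 1) ((⇑f.symm)^[n + 1] x)).symm) u‖
      * Real.exp ((chi - ε) * (n + 1)))

/-- Both series defining the `ε`-Lyapunov norm converge at `x` (for every vector). -/
def LyapNormDefined {X V : Type*} [NormedAddCommGroup V] [NormedSpace ℝ V]
    (f : X ≃ X) (A : X → (V ≃L[ℝ] V)) (lam chi ε : ℝ) (x : X) : Prop :=
  ∀ u : V,
    Summable (fun n : ℕ => ‖(coc (⇑f) A n x) u‖ * Real.exp (-(lam + ε) * n)) ∧
    Summable (fun n : ℕ => ‖((coc (⇑f) A (n + 1) ((⇑f.symm)^[n + 1] x)).symm) u‖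
      * Real.exp ((chi - ε) * (n + 1)))

/-- The operator norm of `B` with respect to the `ε`-Lyapunov norms at `x` (source)
and `y` (target): `‖B‖_{y←x} = sup { ‖Bu‖_{y,ε} : ‖u‖_{x,ε} = 1 }`. -/
def lyapOpNorm {X V : Type*} [NormedAddCommGroup V] [NormedSpace ℝ V]
    (f : X ≃ X) (A : X → (V ≃L[ℝ] V)) (lam chi ε : ℝ) (x y : X) (B : V →L[ℝ] V) : ℝ :=
  sSup { t : ℝ | ∃ u : V, lyapNorm f A lam chi ε x u = 1 ∧
    t = lyapNorm f A lam chi ε y (B u) }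

namespace LyapAux

variable {X V : Type*} [NormedAddCommGroup V] [NormedSpace ℝ V]

/-- Forward series summand of the Lyapunov norm. -/
def afun (f : X ≃ X) (A : X → (V ≃L[ℝ] V)) (lam ε : ℝ) (x : X) (u : V) : ℕ → ℝ :=
  fun n : ℕ => ‖(coc (⇑f) A n x) u‖ * Real.exp (-(lam + ε) * n)

/-- Backward series summand of the Lyapunov norm. -/
def bfun (f : X ≃ X) (A : X → (V ≃L[ℝ] V)) (chi ε : ℝ) (x : X) (u : V) : ℕ → ℝ :=
  fun n : ℕ => ‖((coc (⇑f) A (n + 1) ((⇑f.symm)^[n + 1] x)).symm) u‖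
      * Real.exp ((chi - ε) * (n + 1))

variable (f : X ≃ X) (A : X → (V ≃L[ℝ] V))

lemma coc_succ_apply (n : ℕ) (x : X) (u : V) :
    (coc (⇑f) A (n + 1) x) u = A ((⇑f)^[n] x) ((coc (⇑f) A n x) u) := rfl

lemma coc_symm_succ_apply (n : ℕ) (x : X) (u : V) :
    (coc (⇑f) A (n + 1) x).symm u = (coc (⇑f) A n x).symm ((A ((⇑f)^[n] x)).symm u) := rfl

lemma coc_succ'_apply (n : ℕ) (x : X) (u : V) :
    (coc (⇑f) A (n + 1) x) u = (coc (⇑f) A n (f x)) (A x u) := by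
  induction n with
  | zero => rfl
  | succ n ih => rw [coc_succ_apply, ih, Function.iterate_succ_apply, ← coc_succ_apply]

lemma iterate_apply_symm (n : ℕ) (x : X) : (⇑f)^[n] ((⇑f.symm)^[n] x) = x :=
  Function.LeftInverse.iterate f.apply_symm_apply n x

lemma symm_iterate_succ_f (n : ℕ) (x : X) :
    (⇑f.symm)^[n + 1] (f x) = (⇑f.symm)^[n] x := by
  rw [Function.iterate_succ_apply, f.symm_apply_apply]

lemma coc_one_symm_apply (z : X) (u : V) : (coc (⇑f) A 1 z).symm u = (A z).symm u := rfl

/-! ### Transfer identities for the series summands -/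

lemma afun_fx (lam ε : ℝ) (x : X) (u : V) (n : ℕ) :
    afun f A lam ε (f x) u n
      = Real.exp (lam + ε) * afun f A lam ε x ((A x).symm u) (n + 1) := by
  simp only [afun]
  rw [coc_succ'_apply, (A x).apply_symm_apply]
  have hexp : Real.exp (lam + ε) * Real.exp (-(lam + ε) * (↑(n + 1) : ℝ))
      = Real.exp (-(lam + ε) * n) := by
    rw [← Real.exp_add]; congr 1; push_cast; ring
  rw [← hexp]; ring

lemma bfun_fx_succ (chi ε : ℝ) (x : X) (u : V) (n : ℕ) :
    bfun f A chi ε (f x) u (n + 1)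
      = Real.exp (chi - ε) * bfun f A chi ε x ((A x).symm u) n := by
  simp only [bfun]
  rw [symm_iterate_succ_f f (n + 1) x, coc_symm_succ_apply f A (n + 1),
    iterate_apply_symm f (n + 1) x]
  have hexp : Real.exp (chi - ε) * Real.exp ((chi - ε) * ((n : ℝ) + 1))
      = Real.exp ((chi - ε) * ((↑(n + 1) : ℝ) + 1)) := by
    rw [← Real.exp_add]; congr 1; push_cast; ring
  rw [← hexp]; ring

lemma bfun_fx_zero (chi ε : ℝ) (x : X) (u : V) :
    bfun f A chi ε (f x) u 0 = Real.exp (chi - ε) * ‖(A x).symm u‖ := by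
  simp only [bfun]
  rw [symm_iterate_succ_f f 0 x]
  simp only [Function.iterate_zero_apply]
  rw [coc_one_symm_apply]
  norm_num [mul_comm]

lemma afun_y_zero (lam ε : ℝ) (x : X) (w : V) :
    afun f A lam ε (f.symm x) w 0 = ‖w‖ := by
  simp [afun, coc]

lemma afun_y_succ (lam ε : ℝ) (x : X) (w : V) (n : ℕ) :
    afun f A lam ε (f.symm x) w (n + 1)
      = Real.exp (-(lam + ε)) * afun f A lam ε x (A (f.symm x) w) n := by
  simp only [afun]
  rw [coc_succ'_apply, f.apply_symm_apply]
  have hexp : Real.exp (-(lam + ε)) * Real.exp (-(lam + ε) * (n : ℝ))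
      = Real.exp (-(lam + ε) * (↑(n + 1) : ℝ)) := by
    rw [← Real.exp_add]; congr 1; push_cast; ring
  rw [← hexp]; ring

lemma bfun_y (chi ε : ℝ) (x : X) (w : V) (n : ℕ) :
    bfun f A chi ε (f.symm x) w n
      = Real.exp (-(chi - ε)) * bfun f A chi ε x (A (f.symm x) w) (n + 1) := by
  simp only [bfun]
  rw [show ((⇑f.symm)^[n + 1 + 1] x) = (⇑f.symm)^[n + 1] (⇑f.symm x) from
      Function.iterate_succ_apply _ _ _,
    coc_symm_succ_apply f A (n + 1), iterate_apply_symm f (n + 1) (f.symm x),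
    ContinuousLinearEquiv.symm_apply_apply]
  have hexp : Real.exp (-(chi - ε)) * Real.exp ((chi - ε) * ((↑(n + 1) : ℝ) + 1))
      = Real.exp ((chi - ε) * ((n : ℝ) + 1)) := by
    rw [← Real.exp_add]; congr 1; push_cast; ring
  rw [← hexp]; ring

lemma bfun_x_zero (chi ε : ℝ) (x : X) (u : V) :
    bfun f A chi ε x u 0 = ‖(A (f.symm x)).symm u‖ * Real.exp (chi - ε) := by
  simp only [bfun]
  rw [show ((⇑f.symm)^[0 + 1] x) = f.symm x by simp, coc_one_symm_apply]
  norm_num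

/-! ### Summability -/

lemma summable_of_log_tendsto {d : ℕ → ℝ} (hd : ∀ n, 0 ≤ d n) {L δ : ℝ} (hδ : 0 < δ)
    (h : Tendsto (fun n : ℕ => Real.log (d n) / n) atTop (𝓝 L)) :
    Summable (fun n : ℕ => d n * Real.exp (-(L + δ) * n)) := by
  have hev : ∀ᶠ n : ℕ in atTop, Real.log (d n) / n < L + δ / 2 :=
    h.eventually_lt_const (by linarith)
  obtain ⟨N, hN⟩ := Filter.eventually_atTop.1 (hev.and (Filter.eventually_ge_atTop 1))
  have hgeom : Summable (fun n : ℕ => (Real.exp (-(δ / 2))) ^ n) :=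
    summable_geometric_of_lt_one (Real.exp_nonneg _)
      (Real.exp_lt_one_iff.2 (by linarith))
  have key : ∀ m : ℕ, N ≤ m → d m * Real.exp (-(L + δ) * m) ≤ (Real.exp (-(δ / 2))) ^ m := by
    intro m hm
    obtain ⟨hlt, hm1⟩ := hN m hm
    have hmpos : (0 : ℝ) < m := by exact_mod_cast Nat.lt_of_lt_of_le Nat.zero_lt_one hm1
    have hdm : d m ≤ Real.exp ((L + δ / 2) * m) := by
      rcases eq_or_lt_of_le (hd m) with h0 | h0
      · rw [← h0]; exact (Real.exp_pos _).le
      · have hlog : Real.log (d m) < (L + δ / 2) * m := (div_lt_iff₀ hmpos).1 hlt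
        calc d m = Real.exp (Real.log (d m)) := (Real.exp_log h0).symm
          _ ≤ Real.exp ((L + δ / 2) * m) := Real.exp_le_exp.2 hlog.le
    calc d m * Real.exp (-(L + δ) * m)
        ≤ Real.exp ((L + δ / 2) * m) * Real.exp (-(L + δ) * m) :=
          mul_le_mul_of_nonneg_right hdm (Real.exp_nonneg _)
      _ = Real.exp (-(δ / 2) * m) := by rw [← Real.exp_add]; congr 1; ring
      _ = (Real.exp (-(δ / 2))) ^ m := by rw [← Real.exp_nat_mul]; congr 1; ring
  refine (summable_nat_add_iff N).1 ?_
  refine Summable.of_nonneg_of_le (fun n => mul_nonneg (hd _) (Real.exp_nonneg _))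
    (fun n => key (n + N) (Nat.le_add_left N n)) ((summable_nat_add_iff N).2 hgeom)

lemma summable_afun (lam ε : ℝ) (hε : 0 < ε) (x : X)
    (h1 : Tendsto (fun n : ℕ => Real.log (cocNorm (⇑f) A n x) / n) atTop (𝓝 lam))
    (u : V) : Summable (afun f A lam ε x u) := by
  have hS : Summable (fun n : ℕ => cocNorm (⇑f) A n x * Real.exp (-(lam + ε) * n)) :=
    summable_of_log_tendsto (fun n => norm_nonneg _) hε h1
  refine Summable.of_nonneg_of_le
    (fun n => mul_nonneg (norm_nonneg _) (Real.exp_nonneg _)) ?_ (hS.mul_right ‖u‖)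
  intro n
  simp only [afun]
  have hle : ‖(coc (⇑f) A n x) u‖ ≤ cocNorm (⇑f) A n x * ‖u‖ := by
    simpa [cocNorm] using (coc (⇑f) A n x : V →L[ℝ] V).le_opNorm u
  calc ‖(coc (⇑f) A n x) u‖ * Real.exp (-(lam + ε) * n)
      ≤ cocNorm (⇑f) A n x * ‖u‖ * Real.exp (-(lam + ε) * n) :=
        mul_le_mul_of_nonneg_right hle (Real.exp_nonneg _)
    _ = cocNorm (⇑f) A n x * Real.exp (-(lam + ε) * n) * ‖u‖ := by ring

lemma summable_bfun (chi ε : ℝ) (hε : 0 < ε) (x : X)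
    (h3 : Tendsto (fun n : ℕ => Real.log (cocInvNorm (⇑f) A n ((⇑f.symm)^[n] x)) / n)
      atTop (𝓝 (-chi)))
    (u : V) : Summable (bfun f A chi ε x u) := by
  have hS : Summable
      (fun n : ℕ => cocInvNorm (⇑f) A n ((⇑f.symm)^[n] x) * Real.exp (-(-chi + ε) * n)) :=
    summable_of_log_tendsto (fun n => norm_nonneg _) hε h3
  have hS' : Summable (fun n : ℕ =>
      cocInvNorm (⇑f) A (n + 1) ((⇑f.symm)^[n + 1] x) * Real.exp (-(-chi + ε) * (↑(n + 1) : ℝ)) * ‖u‖) :=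
    ((summable_nat_add_iff 1).2 hS).mul_right ‖u‖
  refine Summable.of_nonneg_of_le
    (fun n => mul_nonneg (norm_nonneg _) (Real.exp_nonneg _)) ?_ hS'
  intro n
  simp only [bfun]
  have hle : ‖(coc (⇑f) A (n + 1) ((⇑f.symm)^[n + 1] x)).symm u‖
      ≤ cocInvNorm (⇑f) A (n + 1) ((⇑f.symm)^[n + 1] x) * ‖u‖ := by
    simpa [cocInvNorm] using
      (((coc (⇑f) A (n + 1) ((⇑f.symm)^[n + 1] x)).symm : V →L[ℝ] V)).le_opNorm u
  have hexp : Real.exp ((chi - ε) * ((n : ℝ) + 1)) = Real.exp (-(-chi + ε) * (↑(n + 1) : ℝ)) := by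
    congr 1; push_cast; ring
  calc ‖(coc (⇑f) A (n + 1) ((⇑f.symm)^[n + 1] x)).symm u‖ * Real.exp ((chi - ε) * ((n : ℝ) + 1))
      ≤ cocInvNorm (⇑f) A (n + 1) ((⇑f.symm)^[n + 1] x) * ‖u‖
          * Real.exp ((chi - ε) * ((n : ℝ) + 1)) :=
        mul_le_mul_of_nonneg_right hle (Real.exp_nonneg _)
    _ = cocInvNorm (⇑f) A (n + 1) ((⇑f.symm)^[n + 1] x)
          * Real.exp (-(-chi + ε) * (↑(n + 1) : ℝ)) * ‖u‖ := by rw [hexp]; ring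

/-! ### `chi ≤ lam` -/

lemma chi_le_lam {lam chi : ℝ} {x : X}
    (h2 : Tendsto (fun n : ℕ => Real.log (cocNorm (⇑f) A n ((⇑f.symm)^[n] x)) / n)
      atTop (𝓝 lam))
    (h3 : Tendsto (fun n : ℕ => Real.log (cocInvNorm (⇑f) A n ((⇑f.symm)^[n] x)) / n)
      atTop (𝓝 (-chi))) :
    chi ≤ lam := by
  have key : ∀ n : ℕ, 0 ≤ Real.log (cocNorm (⇑f) A n ((⇑f.symm)^[n] x)) / n
      + Real.log (cocInvNorm (⇑f) A n ((⇑f.symm)^[n] x)) / n := by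
    intro n
    set z := (⇑f.symm)^[n] x
    rcases subsingleton_or_nontrivial V with hV | hV
    · have e1 : cocNorm (⇑f) A n z = 0 := by
        rw [cocNorm, show ((coc (⇑f) A n z : V →L[ℝ] V)) = 0 from Subsingleton.elim _ _,
          norm_zero]
      have e2 : cocInvNorm (⇑f) A n z = 0 := by
        rw [cocInvNorm, show (((coc (⇑f) A n z).symm : V →L[ℝ] V)) = 0 from Subsingleton.elim _ _,
          norm_zero]
      simp [e1, e2]
    · have hid : (((coc (⇑f) A n z).symm : V →L[ℝ] V)).comp ((coc (⇑f) A n z : V →L[ℝ] V))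
          = ContinuousLinearMap.id ℝ V := by
        ext v; simp
      have hprod : 1 ≤ cocInvNorm (⇑f) A n z * cocNorm (⇑f) A n z := by
        calc (1 : ℝ) = ‖ContinuousLinearMap.id ℝ V‖ := ContinuousLinearMap.norm_id.symm
          _ = ‖(((coc (⇑f) A n z).symm : V →L[ℝ] V)).comp ((coc (⇑f) A n z : V →L[ℝ] V))‖ := by
              rw [hid]
          _ ≤ cocInvNorm (⇑f) A n z * cocNorm (⇑f) A n z :=
              ContinuousLinearMap.opNorm_comp_le _ _
      have hcpos : 0 < cocNorm (⇑f) A n z := by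
        by_contra hc
        push_neg at hc
        have h0 : cocNorm (⇑f) A n z = 0 := le_antisymm hc (norm_nonneg _)
        rw [h0, mul_zero] at hprod; linarith
      have hipos : 0 < cocInvNorm (⇑f) A n z := by
        by_contra hc
        push_neg at hc
        have h0 : cocInvNorm (⇑f) A n z = 0 := le_antisymm hc (norm_nonneg _)
        rw [h0, zero_mul] at hprod; linarith
      have hlog : 0 ≤ Real.log (cocNorm (⇑f) A n z) + Real.log (cocInvNorm (⇑f) A n z) := by
        rw [← Real.log_mul hcpos.ne' hipos.ne']
        exact Real.log_nonneg (by rw [mul_comm] at hprod; exact hprod)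
      rw [← add_div]
      exact div_nonneg (by linarith) (Nat.cast_nonneg n)
  have := ge_of_tendsto' (h2.add h3) key
  linarith

end LyapAux

namespace LyapAux

variable {X V : Type*} [NormedAddCommGroup V] [NormedSpace ℝ V]
variable (f : X ≃ X) (A : X → (V ≃L[ℝ] V))

lemma lyapNorm_fx_le (lam chi ε : ℝ) (hcl : chi - ε ≤ lam + ε) (x : X) (u : V)
    (ha : Summable (afun f A lam ε x u)) (hb : Summable (bfun f A chi ε x u)) :
    lyapNorm f A lam chi ε (f x) (A x u)
      ≤ Real.exp (lam + ε) * lyapNorm f A lam chi ε x u := by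
  have hsymm : (A x).symm (A x u) = u := (A x).symm_apply_apply u
  have he'E : Real.exp (chi - ε) ≤ Real.exp (lam + ε) := Real.exp_le_exp.2 hcl
  -- forward sum
  have h1 : ∀ n : ℕ, afun f A lam ε (f x) (A x u) n
      = Real.exp (lam + ε) * afun f A lam ε x u (n + 1) := by
    intro n; rw [afun_fx, hsymm]
  have hT1 : (∑' n : ℕ, afun f A lam ε (f x) (A x u) n)
      = Real.exp (lam + ε) * ((∑' n : ℕ, afun f A lam ε x u n) - afun f A lam ε x u 0) := by
    rw [tsum_congr h1, tsum_mul_left]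
    congr 1
    rw [Summable.tsum_eq_zero_add ha]; ring
  -- backward sum
  have h2 : ∀ n : ℕ, bfun f A chi ε (f x) (A x u) (n + 1)
      = Real.exp (chi - ε) * bfun f A chi ε x u n := by
    intro n; rw [bfun_fx_succ, hsymm]
  have hbfx : Summable (bfun f A chi ε (f x) (A x u)) := by
    refine (summable_nat_add_iff 1).1 ?_
    exact (hb.mul_left (Real.exp (chi - ε))).congr (fun n => (h2 n).symm)
  have hT2 : (∑' n : ℕ, bfun f A chi ε (f x) (A x u) n)
      = Real.exp (chi - ε) * ‖u‖ + Real.exp (chi - ε) * (∑' n : ℕ, bfun f A chi ε x u n) := by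
    rw [Summable.tsum_eq_zero_add hbfx]
    congr 1
    · rw [bfun_fx_zero, hsymm]
    · rw [tsum_congr h2, tsum_mul_left]
  have ha0 : afun f A lam ε x u 0 = ‖u‖ := by simp [afun, coc]
  have hSb : 0 ≤ ∑' n : ℕ, bfun f A chi ε x u n :=
    tsum_nonneg (fun n => mul_nonneg (norm_nonneg _) (Real.exp_nonneg _))
  have hgoal1 : lyapNorm f A lam chi ε (f x) (A x u)
      = (∑' n : ℕ, afun f A lam ε (f x) (A x u) n)
        + (∑' n : ℕ, bfun f A chi ε (f x) (A x u) n) := rfl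
  have hgoal2 : lyapNorm f A lam chi ε x u
      = (∑' n : ℕ, afun f A lam ε x u n) + (∑' n : ℕ, bfun f A chi ε x u n) := rfl
  rw [hgoal1, hgoal2, hT1, hT2, ha0]
  have h5 : Real.exp (chi - ε) * ‖u‖ ≤ Real.exp (lam + ε) * ‖u‖ :=
    mul_le_mul_of_nonneg_right he'E (norm_nonneg u)
  have h6 : Real.exp (chi - ε) * (∑' n : ℕ, bfun f A chi ε x u n)
      ≤ Real.exp (lam + ε) * (∑' n : ℕ, bfun f A chi ε x u n) :=
    mul_le_mul_of_nonneg_right he'E hSb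
  rw [mul_sub, mul_add]
  linarith

lemma lyapNorm_y_le (lam chi ε : ℝ) (hcl : chi - ε ≤ lam + ε) (x : X) (u : V)
    (ha : Summable (afun f A lam ε x u)) (hb : Summable (bfun f A chi ε x u)) :
    lyapNorm f A lam chi ε (f.symm x) ((A (f.symm x)).symm u)
      ≤ Real.exp (-chi + ε) * lyapNorm f A lam chi ε x u := by
  set w := (A (f.symm x)).symm u with hw
  have hAw : A (f.symm x) w = u := (A (f.symm x)).apply_symm_apply u
  have h1 : ∀ n : ℕ, afun f A lam ε (f.symm x) w (n + 1)
      = Real.exp (-(lam + ε)) * afun f A lam ε x u n := by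
    intro n; rw [afun_y_succ, hAw]
  have hay : Summable (afun f A lam ε (f.symm x) w) := by
    refine (summable_nat_add_iff 1).1 ?_
    exact (ha.mul_left (Real.exp (-(lam + ε)))).congr (fun n => (h1 n).symm)
  have hT1 : (∑' n : ℕ, afun f A lam ε (f.symm x) w n)
      = ‖w‖ + Real.exp (-(lam + ε)) * (∑' n : ℕ, afun f A lam ε x u n) := by
    rw [Summable.tsum_eq_zero_add hay, afun_y_zero]
    congr 1
    rw [tsum_congr h1, tsum_mul_left]
  have h2 : ∀ n : ℕ, bfun f A chi ε (f.symm x) w n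
      = Real.exp (-(chi - ε)) * bfun f A chi ε x u (n + 1) := by
    intro n; rw [bfun_y, hAw]
  have hT2 : (∑' n : ℕ, bfun f A chi ε (f.symm x) w n)
      = Real.exp (-(chi - ε))
        * ((∑' n : ℕ, bfun f A chi ε x u n) - bfun f A chi ε x u 0) := by
    rw [tsum_congr h2, tsum_mul_left]
    congr 1
    rw [Summable.tsum_eq_zero_add hb]; ring
  have hb0 : bfun f A chi ε x u 0 = ‖w‖ * Real.exp (chi - ε) := by
    rw [bfun_x_zero, hw]
  have hSf : 0 ≤ ∑' n : ℕ, afun f A lam ε x u n :=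
    tsum_nonneg (fun n => mul_nonneg (norm_nonneg _) (Real.exp_nonneg _))
  have hexp : Real.exp (-(chi - ε)) = Real.exp (-chi + ε) := by congr 1; ring
  have hle : Real.exp (-(lam + ε)) ≤ Real.exp (-(chi - ε)) :=
    Real.exp_le_exp.2 (by linarith)
  have hgoal1 : lyapNorm f A lam chi ε (f.symm x) w
      = (∑' n : ℕ, afun f A lam ε (f.symm x) w n)
        + (∑' n : ℕ, bfun f A chi ε (f.symm x) w n) := rfl
  have hgoal2 : lyapNorm f A lam chi ε x u
      = (∑' n : ℕ, afun f A lam ε x u n) + (∑' n : ℕ, bfun f A chi ε x u n) := rfl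
  rw [hgoal1, hgoal2, hT1, hT2, hb0, ← hexp, mul_sub, mul_add]
  have hcancel : Real.exp (-(chi - ε)) * (‖w‖ * Real.exp (chi - ε)) = ‖w‖ := by
    rw [mul_comm ‖w‖, ← mul_assoc, ← Real.exp_add]
    simp
  have h5 : Real.exp (-(lam + ε)) * (∑' n : ℕ, afun f A lam ε x u n)
      ≤ Real.exp (-(chi - ε)) * (∑' n : ℕ, afun f A lam ε x u n) :=
    mul_le_mul_of_nonneg_right hle hSf
  linarith

end LyapAux

/-- **Proposition (Lyapunov norm, part (i)).** For a bounded measurable Banach cocycle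
over an ergodic invertible measure-preserving transformation, for every `x ∈ Λ` the
`ε`-Lyapunov norms are defined at `x`, `f x` and `f⁻¹ x`, and
`‖𝔸_x‖_{fx←x,ε} ≤ e^{lam+ε}`, `‖(𝔸_x)⁻¹‖_{f⁻¹x←x,ε} ≤ e^{-chi+ε}`. -/
theorem lyapunov_norm_estimates
    {X V : Type*} [MeasurableSpace X]
    [NormedAddCommGroup V] [NormedSpace ℝ V] [CompleteSpace V]
    (f : X ≃ X) (μ : Measure X) [IsProbabilityMeasure μ]
    (hf : Ergodic (⇑f) μ) (hfsymm : Measurable (⇑f.symm))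
    (A : X → (V ≃L[ℝ] V)) (hbdd : IsBoundedCocycle A)
    (lam chi : ℝ)
    (hlam : ∀ᵐ x ∂μ,
      Tendsto (fun n : ℕ => Real.log (cocNorm (⇑f) A n x) / n) atTop (𝓝 lam))
    (hchi : ∀ᵐ x ∂μ,
      Tendsto (fun n : ℕ => Real.log ((cocInvNorm (⇑f) A n x)⁻¹) / n) atTop (𝓝 chi))
    (ε : ℝ) (hε : 0 < ε) :
    ∀ x ∈ lyapSet f A lam chi,
      LyapNormDefined f A lam chi ε x ∧
      LyapNormDefined f A lam chi ε (f x) ∧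
      LyapNormDefined f A lam chi ε (f.symm x) ∧
      lyapOpNorm f A lam chi ε x (f x) (A x : V →L[ℝ] V) ≤ Real.exp (lam + ε) ∧
      lyapOpNorm f A lam chi ε x (f.symm x) ((A (f.symm x)).symm : V →L[ℝ] V)
        ≤ Real.exp (-chi + ε) := by
  intro x hx
  obtain ⟨h1, h2, h3⟩ := hx
  have hchile : chi ≤ lam := LyapAux.chi_le_lam f A h2 h3
  have hcl : chi - ε ≤ lam + ε := by linarith
  have ha : ∀ u : V, Summable (LyapAux.afun f A lam ε x u) :=
    LyapAux.summable_afun f A lam ε hε x h1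
  have hb : ∀ u : V, Summable (LyapAux.bfun f A chi ε x u) :=
    LyapAux.summable_bfun f A chi ε hε x h3
  have hafx : ∀ u : V, Summable (LyapAux.afun f A lam ε (f x) u) := by
    intro u
    exact (((summable_nat_add_iff 1).2 (ha ((A x).symm u))).mul_left
      (Real.exp (lam + ε))).congr (fun n => (LyapAux.afun_fx f A lam ε x u n).symm)
  have hbfx : ∀ u : V, Summable (LyapAux.bfun f A chi ε (f x) u) := by
    intro u
    refine (summable_nat_add_iff 1).1 ?_
    exact ((hb ((A x).symm u)).mul_left (Real.exp (chi - ε))).congr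
      (fun n => (LyapAux.bfun_fx_succ f A chi ε x u n).symm)
  have hay : ∀ u : V, Summable (LyapAux.afun f A lam ε (f.symm x) u) := by
    intro u
    refine (summable_nat_add_iff 1).1 ?_
    exact ((ha (A (f.symm x) u)).mul_left (Real.exp (-(lam + ε)))).congr
      (fun n => (LyapAux.afun_y_succ f A lam ε x u n).symm)
  have hby : ∀ u : V, Summable (LyapAux.bfun f A chi ε (f.symm x) u) := by
    intro u
    exact (((summable_nat_add_iff 1).2 (hb (A (f.symm x) u))).mul_left
      (Real.exp (-(chi - ε)))).congr (fun n => (LyapAux.bfun_y f A chi ε x u n).symm)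
  refine ⟨fun u => ⟨ha u, hb u⟩, fun u => ⟨hafx u, hbfx u⟩, fun u => ⟨hay u, hby u⟩, ?_, ?_⟩
  · refine Real.sSup_le ?_ (Real.exp_nonneg _)
    rintro t ⟨u, hu, rfl⟩
    have h := LyapAux.lyapNorm_fx_le f A lam chi ε hcl x u (ha u) (hb u)
    rw [hu, mul_one] at h
    simpa using h
  · refine Real.sSup_le ?_ (Real.exp_nonneg _)
    rintro t ⟨u, hu, rfl⟩
    have h := LyapAux.lyapNorm_y_le f A lam chi ε hcl x u (ha u) (hb u)
    rw [hu, mul_one] at h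
    simpa using h
end
end

section
/- Let (X,f,μ) be an ergodic measure-preserving system and let (a_n) be an integrable subadditive cocycle over f whose exponent λ := inf_n (1/n)∫_X a_n dμ is finite. Then there exists a set E ⊆ X with μ(E) = 1 such that for each x ∈ E and each ε > 0 there is an integer L = L(x,ε) and infinitely many n such that a_n(x) − a_{n−i}(f^i x) ≥ (λ − ε)·i for all integers i with L ≤ i ≤ n. -/
open MeasureTheory Filter Topology

noncomputable section

/-- `a` is a subadditive cocycle over `f`: `a_{n+k}(x) ≤ a_k(x) + a_n(f^k x)`. -/
def IsSubadditiveCocycle {X : Type*} (f : X → X) (a : ℕ → X → ℝ) : Prop :=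
  ∀ (x : X) (k n : ℕ), 0 < k → 0 < n → a (n + k) x ≤ a k x + a n (f^[k] x)

private lemma km_aux_full_measure
    {X : Type*} [MeasurableSpace X] {μ : Measure X} [IsProbabilityMeasure μ]
    {f : X → X} (hf : Ergodic f μ) {S T : Set X} (hT : MeasurableSet T)
    (hS : 0 < μ S) (hST : ∀ k : ℕ, 0 < k → S ⊆ f^[k] ⁻¹' T) : μ T = 1 := by
  have hfm : Measurable f := hf.toMeasurePreserving.measurable
  set C : ℕ → Set X := fun K => ⋂ k : ℕ, f^[k + K + 1] ⁻¹' T with hC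
  have hCm : ∀ K, MeasurableSet (C K) :=
    fun K => MeasurableSet.iInter fun k => (hfm.iterate _) hT
  have hCmono : Monotone C := by
    intro K K' hKK' x hx
    simp only [hC, Set.mem_iInter] at hx ⊢
    intro k
    have h := hx (k + K' - K)
    rwa [show k + K' - K + K + 1 = k + K' + 1 by omega] at h
  have hfC : ∀ K, f ⁻¹' C K = C (K + 1) := by
    intro K
    simp only [hC, Set.preimage_iInter]
    refine Set.iInter_congr fun k => ?_
    rw [← Set.preimage_comp, ← Function.iterate_succ]
    simp only [Nat.succ_eq_add_one, show k + K + 1 + 1 = k + (K + 1) + 1 from by omega]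
  have hAm : MeasurableSet (⋃ K, C K) := MeasurableSet.iUnion hCm
  have hfA : f ⁻¹' (⋃ K, C K) = ⋃ K, C K := by
    rw [Set.preimage_iUnion]
    apply Set.Subset.antisymm
    · exact Set.iUnion_subset fun K => by
        rw [hfC K]; exact Set.subset_iUnion C (K + 1)
    · intro x hx
      rw [Set.mem_iUnion] at hx
      obtain ⟨K, hK⟩ := hx
      have hx2 : x ∈ C (K + 1) := hCmono (Nat.le_succ K) hK
      rw [← hfC K] at hx2
      exact Set.mem_iUnion.mpr ⟨K, hx2⟩
  have hSC0 : S ⊆ C 0 := by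
    intro x hx
    simp only [hC, Set.mem_iInter]
    intro k
    exact hST (k + 0 + 1) (by omega) hx
  have hA1 : μ (⋃ K, C K) = 1 := by
    rcases hf.toPreErgodic.prob_eq_zero_or_one hAm hfA with h0 | h1
    · exfalso
      have : μ S ≤ μ (⋃ K, C K) :=
        measure_mono (le_trans hSC0 (Set.subset_iUnion C 0))
      rw [h0] at this
      exact absurd (le_antisymm this zero_le) (ne_of_gt hS)
    · exact h1
  have hsup : μ (⋃ K, C K) = ⨆ K, μ (C K) := Directed.measure_iUnion (hCmono.directed_le)
  have hCT : ∀ K, μ (C K) ≤ μ T := by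
    intro K
    have h1 : C K ⊆ f^[K + 1] ⁻¹' T := by
      intro x hx
      simp only [hC, Set.mem_iInter] at hx
      have := hx 0
      simpa using this
    calc μ (C K) ≤ μ (f^[K + 1] ⁻¹' T) := measure_mono h1
    _ = μ T := (hf.toMeasurePreserving.iterate (K + 1)).measure_preimage hT.nullMeasurableSet
  have hT1 : (1 : ENNReal) ≤ μ T := by
    rw [← hA1, hsup]
    exact iSup_le hCT
  exact le_antisymm prob_le_one hT1

/-- **Proposition (Karlsson–Margulis).** For an integrable subadditive cocycle with
finite exponent `lam = inf_n (1/n)∫ a_n dμ` over an ergodic measure-preserving system,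
there is a full-measure set `E` such that for each `x ∈ E` and `ε > 0` there is `L`
and infinitely many `n` with `a_n(x) - a_{n-i}(f^i x) ≥ (lam - ε)·i` for all
`L ≤ i ≤ n`. -/
theorem karlsson_margulis_good_times
    {X : Type*} [MeasurableSpace X] (μ : Measure X) [IsProbabilityMeasure μ]
    (f : X → X) (hf : Ergodic f μ)
    (a : ℕ → X → ℝ) (hsub : IsSubadditiveCocycle f a)
    (hint : ∀ n : ℕ, Integrable (a n) μ)
    (lam : ℝ)
    (hlam : IsGLB { t : ℝ | ∃ n : ℕ, 0 < n ∧ t = (∫ x, a n x ∂μ) / n } lam) :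
    ∃ E : Set X, μ E = 1 ∧ ∀ x ∈ E, ∀ ε : ℝ, 0 < ε → ∃ L : ℕ,
      ∀ N : ℕ, ∃ n : ℕ, N ≤ n ∧
        ∀ i : ℕ, L ≤ i → i ≤ n → (lam - ε) * i ≤ a n x - a (n - i) (f^[i] x) := by
  classical
  have hmp := hf.toMeasurePreserving
  have hfm : Measurable f := hmp.measurable
  have hiter : ∀ j : ℕ, MeasurePreserving (f^[j]) μ μ := fun j => hmp.iterate j
  -- measurable representatives
  set b : ℕ → X → ℝ := fun n => ((hint n).1.mk (a n)) with hbdef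
  have hbm : ∀ n, StronglyMeasurable (b n) := fun n => (hint n).1.stronglyMeasurable_mk
  have hbmm : ∀ n, Measurable (b n) := fun n => (hbm n).measurable
  have hbae : ∀ n, a n =ᵐ[μ] b n := fun n => (hint n).1.ae_eq_mk
  have hbint : ∀ n, Integrable (b n) μ := fun n => (hint n).congr (hbae n)
  have hbI : ∀ n, ∫ x, b n x ∂μ = ∫ x, a n x ∂μ := fun n => integral_congr_ae (hbae n).symm
  have hlow : ∀ n : ℕ, 0 < n → (n : ℝ) * lam ≤ ∫ x, b n x ∂μ := by
    intro n hn
    have h1 : lam ≤ (∫ x, a n x ∂μ) / n := hlam.1 ⟨n, hn, rfl⟩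
    rw [hbI]
    rw [le_div_iff₀ (by positivity : (0 : ℝ) < (n : ℝ))] at h1
    linarith
  -- integral helpers
  have hcompint : ∀ (g : X → ℝ), Integrable g μ → ∀ j : ℕ,
      Integrable (fun x => g (f^[j] x)) μ := by
    intro g hg j
    exact ((hiter j).integrable_comp hg.aestronglyMeasurable).mpr hg
  have hcompeq : ∀ (g : X → ℝ), AEStronglyMeasurable g μ → ∀ j : ℕ,
      ∫ x, g (f^[j] x) ∂μ = ∫ x, g x ∂μ := by
    intro g hg j
    have h2 : AEStronglyMeasurable g (Measure.map (f^[j]) μ) := by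
      rwa [(hiter j).map_eq]
    have h3 := integral_map (hiter j).measurable.aemeasurable h2
    rw [(hiter j).map_eq] at h3
    exact h3.symm
  -- the bad null set and the invariant full measure set Ω
  set Nn : Set X := (⋃ n, {x | a n x ≠ b n x}) ∪
      (⋃ k : ℕ, ⋃ n : ℕ,
        {x | ¬ b ((n + 1) + (k + 1)) x ≤ b (k + 1) x + b (n + 1) (f^[k + 1] x)}) with hNn
  have hNnull : μ Nn = 0 := by
    rw [hNn]
    apply measure_union_null
    · apply measure_iUnion_null
      intro n
      exact ae_iff.mp (hbae n)
    · apply measure_iUnion_null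
      intro k
      apply measure_iUnion_null
      intro n
      have hcomp : (fun x => a (n + 1) (f^[k + 1] x)) =ᵐ[μ]
          (fun x => b (n + 1) (f^[k + 1] x)) :=
        (hiter (k + 1)).quasiMeasurePreserving.ae_eq_comp (hbae (n + 1))
      have hae2 : ∀ᵐ x ∂μ, b ((n + 1) + (k + 1)) x ≤ b (k + 1) x + b (n + 1) (f^[k + 1] x) := by
        filter_upwards [hbae ((n + 1) + (k + 1)), hbae (k + 1), hcomp] with x h1 h2 h3
        rw [← h1, ← h2, ← h3]
        exact hsub x (k + 1) (n + 1) (Nat.succ_pos _) (Nat.succ_pos _)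
      exact ae_iff.mp hae2
  set T : Set X := toMeasurable μ Nn with hTdef
  have hTm : MeasurableSet T := measurableSet_toMeasurable μ Nn
  have hTnull : μ T = 0 := by rw [hTdef, measure_toMeasurable]; exact hNnull
  set Ω : Set X := ⋂ i : ℕ, f^[i] ⁻¹' Tᶜ with hΩdef
  have hΩm : MeasurableSet Ω := MeasurableSet.iInter fun i => (hfm.iterate i) hTm.compl
  have hΩc : μ Ωᶜ = 0 := by
    rw [hΩdef, Set.compl_iInter]
    apply measure_iUnion_null
    intro i
    rw [← Set.preimage_compl, compl_compl, (hiter i).measure_preimage hTm.nullMeasurableSet]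
    exact hTnull
  have hΩ1 : μ Ω = 1 := (prob_compl_eq_zero_iff hΩm).mp hΩc
  have hΩmem : ∀ x ∈ Ω, ∀ i : ℕ, f^[i] x ∉ T := by
    intro x hx i
    exact Set.mem_iInter.mp hx i
  have hΩiter : ∀ x ∈ Ω, ∀ t : ℕ, f^[t] x ∈ Ω := by
    intro x hx t
    rw [hΩdef, Set.mem_iInter]
    intro i
    have h := hΩmem x hx (i + t)
    rw [Function.iterate_add_apply] at h
    exact h
  have hnotin : ∀ y, y ∉ T → (∀ n, a n y = b n y) ∧
      (∀ k n : ℕ, 0 < k → 0 < n → b (n + k) y ≤ b k y + b n (f^[k] y)) := by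
    intro y hy
    have hy' : y ∉ Nn := fun h => hy (subset_toMeasurable μ Nn h)
    rw [hNn] at hy'
    simp only [Set.mem_union, Set.mem_iUnion, Set.mem_setOf_eq, not_or, not_exists,
      not_not, ne_eq] at hy'
    obtain ⟨h1, h2⟩ := hy'
    refine ⟨h1, ?_⟩
    intro k n hk hn
    have h := h2 (k - 1) (n - 1)
    rwa [show n - 1 + 1 = n by omega, show k - 1 + 1 = k by omega] at h
  have hΩeq : ∀ x ∈ Ω, ∀ n j : ℕ, a n (f^[j] x) = b n (f^[j] x) :=
    fun x hx n j => (hnotin _ (hΩmem x hx j)).1 n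
  have hΩsub : ∀ x ∈ Ω, ∀ k n : ℕ, 0 < k → 0 < n →
      b (n + k) x ≤ b k x + b n (f^[k] x) := by
    intro x hx
    have h := hnotin x (by simpa using hΩmem x hx 0)
    exact h.2
  -- good sets
  set Good : ℝ → Set X := fun ε => {x | ∃ L : ℕ, ∀ N : ℕ, ∃ n : ℕ, N ≤ n ∧
      ∀ i : ℕ, L ≤ i → i ≤ n → (lam - ε) * (i : ℝ) ≤ b n x - b (n - i) (f^[i] x)} with hGood
  have hGm : ∀ ε : ℝ, MeasurableSet (Good ε) := by
    intro ε
    have heq : Good ε = ⋃ L : ℕ, ⋂ N : ℕ, ⋃ n : ℕ, ⋃ _ : N ≤ n, ⋂ i : ℕ, ⋂ _ : L ≤ i,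
        ⋂ _ : i ≤ n, {x | (lam - ε) * (i : ℝ) ≤ b n x - b (n - i) (f^[i] x)} := by
      ext x
      simp only [hGood, Set.mem_setOf_eq, Set.mem_iUnion, Set.mem_iInter, exists_prop]
    rw [heq]
    apply MeasurableSet.iUnion; intro L
    apply MeasurableSet.iInter; intro N
    apply MeasurableSet.iUnion; intro n
    apply MeasurableSet.iUnion; intro _
    apply MeasurableSet.iInter; intro i
    apply MeasurableSet.iInter; intro _
    apply MeasurableSet.iInter; intro _
    exact measurableSet_le measurable_const
      ((hbmm n).sub ((hbmm (n - i)).comp (hfm.iterate i)))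
  have hΩae : ∀ᵐ x ∂μ, x ∈ Ω := by
    rw [ae_iff]
    exact hΩc
  -- KEY STEP (★): each good set has positive measure
  have key : ∀ ε : ℝ, 0 < ε → 0 < μ (Ω ∩ Good ε) := by
    intro ε hε
    by_contra hcon
    have hzero : μ (Ω ∩ Good ε) = 0 := le_antisymm (not_lt.mp hcon) zero_le
    -- V r y : the normalized cocycle, V 0 = b 0
    set V : ℕ → X → ℝ := fun r y => if r = 0 then b 0 y else b r y - (r : ℝ) * (lam - ε)
      with hV
    have hV0 : ∀ y, V 0 y = b 0 y := fun y => by simp [hV]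
    have hVpos : ∀ r, r ≠ 0 → ∀ y, V r y = b r y - (r : ℝ) * (lam - ε) := by
      intro r hr y; simp [hV, hr]
    have hVm : ∀ r, Measurable (V r) := by
      intro r
      rcases Nat.eq_zero_or_pos r with h | h
      · subst h
        have : V 0 = b 0 := funext hV0
        rw [this]; exact hbmm 0
      · have : V r = fun y => b r y - (r : ℝ) * (lam - ε) :=
          funext (hVpos r (by omega))
        rw [this]
        exact (hbmm r).sub measurable_const
    have hVint : ∀ r, Integrable (V r) μ := by
      intro r
      rcases Nat.eq_zero_or_pos r with h | h
      · subst h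
        have : V 0 = b 0 := funext hV0
        rw [this]; exact hbint 0
      · have : V r = fun y => b r y - (r : ℝ) * (lam - ε) :=
          funext (hVpos r (by omega))
        rw [this]
        exact (hbint r).sub (integrable_const _)
    set B : ℕ → Set X := fun N₀ => {x | ∀ n : ℕ, N₀ ≤ n → ∃ i : ℕ,
        1 ≤ i ∧ i ≤ n ∧ V n x < V (n - i) (f^[i] x)} with hB
    have hBm : ∀ N₀, MeasurableSet (B N₀) := by
      intro N₀
      have heq : B N₀ = ⋂ n : ℕ, ⋂ _ : N₀ ≤ n, ⋃ i : ℕ, ⋃ _ : 1 ≤ i, ⋃ _ : i ≤ n,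
          {x | V n x < V (n - i) (f^[i] x)} := by
        ext x
        simp only [hB, Set.mem_setOf_eq, Set.mem_iInter, Set.mem_iUnion, exists_prop]
      rw [heq]
      apply MeasurableSet.iInter; intro n
      apply MeasurableSet.iInter; intro _
      apply MeasurableSet.iUnion; intro i
      apply MeasurableSet.iUnion; intro _
      apply MeasurableSet.iUnion; intro _
      exact measurableSet_lt (hVm n) ((hVm (n - i)).comp (hfm.iterate i))
    have hBmono : Monotone B := by
      intro N N' hNN' x hx n hn
      exact hx n (le_trans hNN' hn)
    -- the union of the B's has full measure
    have hBfull : μ (⋃ N, B N) = 1 := by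
      have hGz : μ (Good ε) = 0 := by
        have hsubset : Good ε ⊆ (Ω ∩ Good ε) ∪ Ωᶜ := by
          intro x hx
          by_cases h : x ∈ Ω
          · exact Or.inl ⟨h, hx⟩
          · exact Or.inr h
        refine le_antisymm ?_ zero_le
        calc μ (Good ε) ≤ μ ((Ω ∩ Good ε) ∪ Ωᶜ) := measure_mono hsubset
        _ ≤ μ (Ω ∩ Good ε) + μ Ωᶜ := measure_union_le _ _
        _ = 0 := by rw [hzero, hΩc, add_zero]
      have hconv : ∀ (x : X) (n i : ℕ), 1 ≤ i → i ≤ n →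
          b n x - b (n - i) (f^[i] x) < (lam - ε) * (i : ℝ) →
          V n x < V (n - i) (f^[i] x) := by
        intro x n i h1 h2 hlt
        have hn0 : n ≠ 0 := by omega
        rcases Nat.eq_zero_or_pos (n - i) with h | h
        · have hin : i = n := by omega
          subst hin
          rw [Nat.sub_self] at hlt ⊢
          rw [hVpos i hn0, hV0]
          linarith
        · rw [hVpos n hn0, hVpos (n - i) (by omega)]
          have hc : ((n - i : ℕ) : ℝ) = (n : ℝ) - (i : ℝ) := by
            push_cast [Nat.cast_sub h2]
            ring
          rw [hc]
          nlinarith [hlt]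
      have hsub2 : Ω \ Good ε ⊆ ⋃ N, B N := by
        intro x hx
        obtain ⟨hxΩ, hxg⟩ := hx
        simp only [hGood, Set.mem_setOf_eq] at hxg
        push_neg at hxg
        obtain ⟨N, hN⟩ := hxg 1
        refine Set.mem_iUnion.mpr ⟨N, ?_⟩
        intro n hn
        obtain ⟨i, h1, h2, h3⟩ := hN n hn
        exact ⟨i, h1, h2, hconv x n i h1 h2 h3⟩
      have hdiff : μ (Ω \ Good ε) = 1 := by
        have hcm : MeasurableSet (Ω \ Good ε) := hΩm.diff (hGm ε)
        rw [← prob_compl_eq_zero_iff hcm]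
        have : (Ω \ Good ε)ᶜ = Ωᶜ ∪ Good ε := by
          rw [Set.diff_eq, Set.compl_inter, compl_compl]
        rw [this]
        refine le_antisymm ?_ zero_le
        calc μ (Ωᶜ ∪ Good ε) ≤ μ Ωᶜ + μ (Good ε) := measure_union_le _ _
        _ = 0 := by rw [hΩc, hGz, add_zero]
      exact le_antisymm prob_le_one (hdiff ▸ measure_mono hsub2)
    -- the weight function
    set Gf : X → ℝ := fun y => |b 1 y| + |lam - ε| with hGf
    have hGfm : Measurable Gf := (hbmm 1).abs.add measurable_const
    have hGfnn : ∀ y, 0 ≤ Gf y := fun y => add_nonneg (abs_nonneg _) (abs_nonneg _)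
    have hGfint : Integrable Gf μ := (hbint 1).abs.add (integrable_const _)
    -- choose N₀ with small boundary integral
    have htendae : ∀ᵐ x ∂μ, Tendsto (fun N => Set.indicator (B N)ᶜ Gf x) atTop
        (𝓝 (Set.indicator (⋃ N, B N)ᶜ Gf x)) := by
      filter_upwards with x
      rcases em (x ∈ ⋃ N, B N) with h | h
      · have h0 : Set.indicator (⋃ N, B N)ᶜ Gf x = 0 :=
          Set.indicator_of_notMem (by simpa using h) _
        rw [h0]
        obtain ⟨N₀, hN₀⟩ := Set.mem_iUnion.mp h
        apply Tendsto.congr' _ tendsto_const_nhds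
        filter_upwards [eventually_ge_atTop N₀] with N hN
        have : x ∈ B N := hBmono hN hN₀
        exact (Set.indicator_of_notMem (by simpa using this) _).symm
      · have hx : ∀ N, x ∉ B N := fun N hN => h (Set.mem_iUnion.mpr ⟨N, hN⟩)
        have h1 : ∀ N, Set.indicator (B N)ᶜ Gf x = Gf x := fun N =>
          Set.indicator_of_mem (by simpa using hx N) _
        have h2 : Set.indicator (⋃ N, B N)ᶜ Gf x = Gf x :=
          Set.indicator_of_mem (by simpa using h) _
        rw [h2]
        apply Tendsto.congr (fun N => (h1 N).symm) tendsto_const_nhds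
    have htend : Tendsto (fun N => ∫ x, Set.indicator (B N)ᶜ Gf x ∂μ) atTop
        (𝓝 (∫ x, Set.indicator (⋃ N, B N)ᶜ Gf x ∂μ)) := by
      apply tendsto_integral_of_dominated_convergence Gf
      · intro N
        exact (hGfm.indicator (hBm N).compl).aestronglyMeasurable
      · exact hGfint
      · intro N
        filter_upwards with x
        rw [Real.norm_eq_abs,
          abs_of_nonneg (Set.indicator_nonneg (fun y _ => hGfnn y) x)]
        exact Set.indicator_le_self' (fun y _ => hGfnn y) x
      · exact htendae
    have hlim0 : ∫ x, Set.indicator (⋃ N, B N)ᶜ Gf x ∂μ = 0 := by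
      have hnull : μ ((⋃ N, B N)ᶜ) = 0 := by
        rw [prob_compl_eq_zero_iff (MeasurableSet.iUnion hBm)]
        exact hBfull
      have hae0 : Set.indicator (⋃ N, B N)ᶜ Gf =ᵐ[μ] 0 := by
        have hael : ∀ᵐ x ∂μ, x ∈ ⋃ N, B N := ae_iff.mpr hnull
        filter_upwards [hael] with x hx
        exact Set.indicator_of_notMem (by simpa using hx) _
      rw [integral_congr_ae hae0]
      simp
    rw [hlim0] at htend
    have hev := htend.eventually_lt_const (by positivity : (0 : ℝ) < ε / 2)
    obtain ⟨N₁, hN₁⟩ := hev.exists_forall_of_atTop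
    set N₀ : ℕ := max N₁ 1 with hN₀def
    have hN₀1 : 1 ≤ N₀ := le_max_right _ _
    set β : ℝ := ∫ x, Set.indicator (B N₀)ᶜ Gf x ∂μ with hβdef
    have hβ : β < ε / 2 := hN₁ N₀ (le_max_left _ _)
    have hβnn : 0 ≤ β :=
      integral_nonneg (fun x => Set.indicator_nonneg (fun y _ => hGfnn y) x)
    set IG : ℝ := ∫ x, Gf x ∂μ with hIGdef
    have hIGnn : 0 ≤ IG := integral_nonneg (fun x => hGfnn x)
    set I0 : ℝ := ∫ x, |b 0 x| ∂μ with hI0def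
    have hI0nn : 0 ≤ I0 := integral_nonneg (fun x => abs_nonneg _)
    -- the pointwise cutting bound
    have claim : ∀ x ∈ Ω, ∀ n r t : ℕ, t + r = n →
        V r (f^[t] x) ≤ (∑ j ∈ Finset.Ico t n,
          (Set.indicator (B N₀)ᶜ Gf (f^[j] x) + (if n < j + N₀ then Gf (f^[j] x) else 0)))
          + |b 0 (f^[n] x)| := by
      intro x hx n r
      induction r using Nat.strong_induction_on with
      | _ r IH =>
        intro t ht
        have hterm_nonneg : ∀ j, 0 ≤ Set.indicator (B N₀)ᶜ Gf (f^[j] x) +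
            (if n < j + N₀ then Gf (f^[j] x) else 0) := by
          intro j
          have h1 : 0 ≤ Set.indicator (B N₀)ᶜ Gf (f^[j] x) :=
            Set.indicator_nonneg (fun y _ => hGfnn y) _
          have h2 : 0 ≤ (if n < j + N₀ then Gf (f^[j] x) else 0) := by
            split_ifs
            · exact hGfnn _
            · exact le_refl 0
          linarith
        rcases Nat.eq_zero_or_pos r with hr0 | hrpos
        · subst hr0
          have htn : t = n := by omega
          subst htn
          rw [hV0]
          have hico : Finset.Ico t t = ∅ := by simp
          rw [hico, Finset.sum_empty, zero_add]
          exact le_abs_self _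
        · by_cases hcase : f^[t] x ∈ B N₀ ∧ N₀ ≤ r
          · -- jump step
            obtain ⟨hmem, hrN⟩ := hcase
            obtain ⟨i, hi1, hir, hlt⟩ := hmem r hrN
            have hfi : f^[i] (f^[t] x) = f^[t + i] x := by
              rw [← Function.iterate_add_apply]
              congr 1
              omega
            rw [hfi] at hlt
            have hIH := IH (r - i) (by omega) (t + i) (by omega)
            refine le_trans (le_of_lt hlt) (le_trans hIH ?_)
            have hsubset : Finset.Ico (t + i) n ⊆ Finset.Ico t n :=
              Finset.Ico_subset_Ico (by omega) le_rfl
            have hmono := Finset.sum_le_sum_of_subset_of_nonneg hsubset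
              (fun j _ _ => hterm_nonneg j)
            linarith
          · -- single step
            have htn : t < n := by omega
            have hGterm : Gf (f^[t] x) ≤ Set.indicator (B N₀)ᶜ Gf (f^[t] x) +
                (if n < t + N₀ then Gf (f^[t] x) else 0) := by
              by_cases hmem : f^[t] x ∈ B N₀
              · have hrN : r < N₀ := by
                  by_contra hcon2
                  exact hcase ⟨hmem, by omega⟩
                have hcond : n < t + N₀ := by omega
                rw [if_pos hcond]
                have h0 : 0 ≤ Set.indicator (B N₀)ᶜ Gf (f^[t] x) :=
                  Set.indicator_nonneg (fun y _ => hGfnn y) _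
                linarith
              · rw [Set.indicator_of_mem (Set.mem_compl hmem)]
                have h2 : 0 ≤ (if n < t + N₀ then Gf (f^[t] x) else 0) := by
                  split_ifs
                  · exact hGfnn _
                  · exact le_refl 0
                linarith
            have hsplit := Finset.sum_eq_sum_Ico_succ_bot htn
              (fun j => Set.indicator (B N₀)ᶜ Gf (f^[j] x) +
                (if n < j + N₀ then Gf (f^[j] x) else 0))
            rcases eq_or_lt_of_le (show 1 ≤ r from hrpos) with hr1 | hr2
            · -- r = 1
              have hr1' : r = 1 := hr1.symm
              subst hr1'
              have hVle : V 1 (f^[t] x) ≤ Gf (f^[t] x) := by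
                rw [hVpos 1 one_ne_zero]
                push_cast
                have ha1 := le_abs_self (b 1 (f^[t] x))
                have ha2 := neg_abs_le (lam - ε)
                simp only [hGf]
                linarith
              have hrest : 0 ≤ ∑ j ∈ Finset.Ico (t + 1) n,
                  (Set.indicator (B N₀)ᶜ Gf (f^[j] x) +
                    (if n < j + N₀ then Gf (f^[j] x) else 0)) :=
                Finset.sum_nonneg (fun j _ => hterm_nonneg j)
              have habs : 0 ≤ |b 0 (f^[n] x)| := abs_nonneg _
              rw [hsplit]
              linarith
            · -- r ≥ 2
              have hy : f^[t] x ∈ Ω := hΩiter x hx t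
              have hsub1 := hΩsub _ hy 1 (r - 1) one_pos (by omega)
              rw [show r - 1 + 1 = r by omega] at hsub1
              have hf1 : f^[1] (f^[t] x) = f^[t + 1] x := by
                rw [← Function.iterate_add_apply]
                congr 1
                omega
              rw [hf1] at hsub1
              have hIH := IH (r - 1) (by omega) (t + 1) (by omega)
              have hVineq : V r (f^[t] x) ≤ Gf (f^[t] x) + V (r - 1) (f^[t + 1] x) := by
                rw [hVpos r (by omega), hVpos (r - 1) (by omega)]
                have hc : ((r - 1 : ℕ) : ℝ) = (r : ℝ) - 1 := by
                  push_cast [Nat.cast_sub (by omega : 1 ≤ r)]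
                  ring
                rw [hc]
                have ha1 := le_abs_self (b 1 (f^[t] x))
                have ha2 := neg_abs_le (lam - ε)
                simp only [hGf]
                nlinarith [hsub1]
              rw [hsplit]
              have := le_trans hVineq (by linarith [hIH] :
                Gf (f^[t] x) + V (r - 1) (f^[t + 1] x) ≤ Gf (f^[t] x) +
                  ((∑ j ∈ Finset.Ico (t + 1) n,
                    (Set.indicator (B N₀)ᶜ Gf (f^[j] x) +
                      (if n < j + N₀ then Gf (f^[j] x) else 0))) + |b 0 (f^[n] x)|))
              linarith [hGterm, this]
    -- integrate the bound
    have hmain : ∀ n : ℕ, 1 ≤ n →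
        (n : ℝ) * ε ≤ (n : ℝ) * β + (N₀ : ℝ) * IG + I0 := by
      intro n hn1
      set W : X → ℝ := fun x => (∑ j ∈ Finset.Ico 0 n,
          (Set.indicator (B N₀)ᶜ Gf (f^[j] x) + (if n < j + N₀ then Gf (f^[j] x) else 0)))
          + |b 0 (f^[n] x)| with hW
      have hterm_int : ∀ j : ℕ, Integrable (fun x =>
          Set.indicator (B N₀)ᶜ Gf (f^[j] x) + (if n < j + N₀ then Gf (f^[j] x) else 0)) μ := by
        intro j
        apply Integrable.add
        · exact hcompint _ (hGfint.indicator (hBm N₀).compl) j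
        · by_cases h : n < j + N₀
          · simp only [h, if_true]
            exact hcompint _ hGfint j
          · simp only [h, if_false]
            exact integrable_const 0
      have habs_int : Integrable (fun x => |b 0 (f^[n] x)|) μ :=
        hcompint _ (hbint 0).abs n
      have hWint : Integrable W μ := by
        rw [hW]
        exact (integrable_finset_sum _ (fun j _ => hterm_int j)).add habs_int
      have hae2 : ∀ᵐ x ∂μ, V n x ≤ W x := by
        filter_upwards [hΩae] with x hx
        have h := claim x hx n n 0 (by omega)
        rw [hW]
        simpa using h
      have h1 : ∫ x, V n x ∂μ ≤ ∫ x, W x ∂μ := integral_mono_ae (hVint n) hWint hae2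
      have h2 : (n : ℝ) * ε ≤ ∫ x, V n x ∂μ := by
        have hVn : V n = fun x => b n x - (n : ℝ) * (lam - ε) :=
          funext (hVpos n (by omega))
        rw [hVn, integral_sub (hbint n) (integrable_const _), integral_const]
        simp only [probReal_univ, one_smul]
        have := hlow n (by omega)
        nlinarith [this]
      have h3 : ∫ x, W x ∂μ ≤ (n : ℝ) * β + (N₀ : ℝ) * IG + I0 := by
        rw [hW, integral_add (integrable_finset_sum _ (fun j _ => hterm_int j)) habs_int,
          integral_finset_sum _ (fun j _ => hterm_int j)]
        have habseq : ∫ x, |b 0 (f^[n] x)| ∂μ = I0 :=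
          hcompeq _ (hbint 0).abs.aestronglyMeasurable n
        have hterm_eq : ∀ j : ℕ, ∫ x,
            (Set.indicator (B N₀)ᶜ Gf (f^[j] x) + (if n < j + N₀ then Gf (f^[j] x) else 0)) ∂μ
            = β + (if n < j + N₀ then IG else 0) := by
          intro j
          rw [integral_add (hcompint _ (hGfint.indicator (hBm N₀).compl) j)
            (by
              by_cases h : n < j + N₀
              · simp only [h, if_true]; exact hcompint _ hGfint j
              · simp only [h, if_false]; exact integrable_const 0)]
          congr 1
          · exact hcompeq _ (hGfint.indicator (hBm N₀).compl).aestronglyMeasurable j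
          · by_cases h : n < j + N₀
            · simp only [h, if_true]
              exact hcompeq _ hGfint.aestronglyMeasurable j
            · simp only [h, if_false]
              exact integral_zero _ _
        rw [Finset.sum_congr rfl (fun j _ => hterm_eq j), Finset.sum_add_distrib, habseq]
        have hsum1 : ∑ _j ∈ Finset.Ico 0 n, β = (n : ℝ) * β := by
          rw [Finset.sum_const, Nat.card_Ico]
          simp [nsmul_eq_mul]
        have hsum2 : ∑ j ∈ Finset.Ico 0 n, (if n < j + N₀ then IG else 0) ≤ (N₀ : ℝ) * IG := by
          rw [← Finset.sum_filter]
          have hcard : ((Finset.Ico 0 n).filter (fun j => n < j + N₀)).card ≤ N₀ := by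
            have hss : (Finset.Ico 0 n).filter (fun j => n < j + N₀) ⊆
                Finset.Ico (n - N₀) n := by
              intro j hj
              simp only [Finset.mem_filter, Finset.mem_Ico] at hj ⊢
              omega
            calc ((Finset.Ico 0 n).filter (fun j => n < j + N₀)).card
                ≤ (Finset.Ico (n - N₀) n).card := Finset.card_le_card hss
            _ = n - (n - N₀) := Nat.card_Ico _ _
            _ ≤ N₀ := by omega
          calc ∑ _j ∈ (Finset.Ico 0 n).filter (fun j => n < j + N₀), IG
              = (((Finset.Ico 0 n).filter (fun j => n < j + N₀)).card : ℝ) * IG := by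
                rw [Finset.sum_const, nsmul_eq_mul]
          _ ≤ (N₀ : ℝ) * IG := by
                apply mul_le_mul_of_nonneg_right _ hIGnn
                exact_mod_cast hcard
        rw [hsum1]
        linarith
      linarith
    -- contradiction
    obtain ⟨n, hn⟩ := exists_nat_gt (((N₀ : ℝ) * IG + I0) / (ε / 2))
    have hnpos : (0 : ℝ) < n := by
      have h0 : (0 : ℝ) ≤ ((N₀ : ℝ) * IG + I0) / (ε / 2) := by positivity
      linarith
    have hn1 : 1 ≤ n := by exact_mod_cast Nat.one_le_iff_ne_zero.mpr (by
      intro h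
      rw [h] at hnpos
      simp at hnpos)
    have hm := hmain n hn1
    rw [div_lt_iff₀ (by positivity : (0 : ℝ) < ε / 2)] at hn
    nlinarith [mul_lt_mul_of_pos_left hβ hnpos]
  -- STEP: goodness propagates along the orbit with a worse ε
  have step : ∀ ε ε' : ℝ, 0 < ε' → ε' < ε → ∀ k : ℕ, 0 < k → ∀ x ∈ Ω,
      x ∈ Good ε' → f^[k] x ∈ Good ε := by
    intro ε ε' hε' hεε' k hk x hxΩ hxG
    have hd : (0 : ℝ) < ε - ε' := by linarith
    simp only [hGood, Set.mem_setOf_eq] at hxG ⊢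
    obtain ⟨L, hL⟩ := hxG
    obtain ⟨M, hM⟩ := exists_nat_ge ((b k x - (lam - ε') * (k : ℝ)) / (ε - ε'))
    set Mx : ℕ := max (L + 1) (M + 1) with hMxdef
    have hMx1 : L + 1 ≤ Mx := le_max_left _ _
    have hMx2 : M + 1 ≤ Mx := le_max_right _ _
    refine ⟨Mx, fun N => ?_⟩
    obtain ⟨m, hm, hgood⟩ := hL (N + k + Mx + 1)
    refine ⟨m - k, by omega, ?_⟩
    intro i hiL hin
    have hLi : L + 1 ≤ i := le_trans hMx1 hiL
    have hMi' : M + 1 ≤ i := le_trans hMx2 hiL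
    have hik : i + k ≤ m := by omega
    have hmk : 0 < m - k := by omega
    have hsubm := hΩsub x hxΩ k (m - k) hk hmk
    rw [show m - k + k = m by omega] at hsubm
    have hgood2 := hgood (i + k) (by omega) hik
    rw [show m - (i + k) = m - k - i by omega] at hgood2
    have hfik : f^[i] (f^[k] x) = f^[i + k] x := by
      rw [← Function.iterate_add_apply]
    rw [hfik]
    have hMle : (b k x - (lam - ε') * (k : ℝ)) ≤ (ε - ε') * (M : ℝ) := by
      rw [div_le_iff₀ hd] at hM
      linarith [hM]
    have hiM : (M : ℝ) ≤ (i : ℝ) := by exact_mod_cast (by omega : M ≤ i)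
    have hcast : ((i + k : ℕ) : ℝ) = (i : ℝ) + (k : ℝ) := by push_cast; ring
    rw [hcast] at hgood2
    have hmul : (ε - ε') * (M : ℝ) ≤ (ε - ε') * (i : ℝ) :=
      mul_le_mul_of_nonneg_left hiM (le_of_lt hd)
    have hMi : b k x - (lam - ε') * (k : ℝ) ≤ (ε - ε') * (i : ℝ) := by
      linarith only [hMle, hmul]
    have hexp : (lam - ε') * ((i : ℝ) + (k : ℝ)) =
        (lam - ε') * (i : ℝ) + (lam - ε') * (k : ℝ) := by ring
    have hexp2 : (lam - ε) * (i : ℝ) =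
        (lam - ε') * (i : ℝ) - (ε - ε') * (i : ℝ) := by ring
    linarith only [hsubm, hgood2, hMi, hexp, hexp2]
  -- bootstrap: each good set has full measure
  have full : ∀ ε : ℝ, 0 < ε → μ (Ω ∩ Good ε) = 1 := by
    intro ε hε
    apply km_aux_full_measure hf (hΩm.inter (hGm ε)) (key (ε / 2) (by positivity))
    intro k hk x hx
    obtain ⟨hxΩ, hxG⟩ := hx
    exact ⟨hΩiter x hxΩ k, step ε (ε / 2) (by positivity) (by linarith) k hk x hxΩ hxG⟩
  -- assemble the final set
  refine ⟨⋂ k : ℕ, (Ω ∩ Good (1 / ((k : ℝ) + 1))), ?_, ?_⟩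
  · have hm : MeasurableSet (⋂ k : ℕ, (Ω ∩ Good (1 / ((k : ℝ) + 1)))) :=
      MeasurableSet.iInter fun k => hΩm.inter (hGm _)
    rw [← prob_compl_eq_zero_iff hm, Set.compl_iInter]
    apply measure_iUnion_null
    intro k
    rw [prob_compl_eq_zero_iff (hΩm.inter (hGm _))]
    exact full _ (by positivity)
  · intro x hx ε hε
    obtain ⟨k, hk⟩ := exists_nat_one_div_lt hε
    have hxk := Set.mem_iInter.mp hx k
    obtain ⟨hxΩ, hxG⟩ := hxk
    simp only [hGood, Set.mem_setOf_eq] at hxG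
    obtain ⟨L, hL⟩ := hxG
    refine ⟨L, fun N => ?_⟩
    obtain ⟨n, hn, hgood⟩ := hL N
    refine ⟨n, hn, fun i h1 h2 => ?_⟩
    have hg := hgood i h1 h2
    have heq1 : a n x = b n x := by
      have := hΩeq x hxΩ n 0
      simpa using this
    have heq2 : a (n - i) (f^[i] x) = b (n - i) (f^[i] x) := hΩeq x hxΩ (n - i) i
    rw [heq1, heq2]
    have hmono : (lam - ε) * (i : ℝ) ≤ (lam - 1 / ((k : ℝ) + 1)) * (i : ℝ) := by
      apply mul_le_mul_of_nonneg_right _ (by positivity)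
      linarith
    linarith
end
end

section
/- Let f : X → X be a homeomorphism of a separable metric space preserving an ergodic Borel probability measure μ. Then there exists a set P ⊆ X with μ(P) = 1 such that for each x ∈ P and all ε, δ > 0 there exists an integer N = N(x,ε,δ) such that for every integer n > N there is an integer k with n(1 + ε) < k < n(1 + 2ε) and dist(x, f^k x) < δ. -/
open MeasureTheory Filter Topology

open Set Function
open scoped ENNReal

section Aux
variable {α : Type*} [MeasurableSpace α] {T : α → α} {μ : MeasureTheory.Measure α} {C : Set α}

noncomputable def vis (T : α → α) (C : Set α) (n : ℕ) (x : α) : ℝ :=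
  birkhoffSum T (C.indicator (fun _ => (1:ℝ))) n x

set_option linter.unusedSectionVars false

lemma vis_nonneg (n : ℕ) (x : α) : 0 ≤ vis T C n x := by
  rw [vis, birkhoffSum]
  exact Finset.sum_nonneg fun k _ => Set.indicator_nonneg (fun _ _ => zero_le_one) _

lemma vis_le (n : ℕ) (x : α) : vis T C n x ≤ n := by
  rw [vis, birkhoffSum]
  calc (∑ k ∈ Finset.range n, C.indicator (fun _ => (1:ℝ)) (T^[k] x)) ≤ ∑ _k ∈ Finset.range n, (1:ℝ) :=
        Finset.sum_le_sum fun k _ => Set.indicator_le_self' (fun _ _ => zero_le_one) _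
    _ = n := by simp

lemma vis_succ' (n : ℕ) (x : α) :
    vis T C (n+1) x = C.indicator (fun _ => (1:ℝ)) x + vis T C n (T x) :=
  birkhoffSum_succ' T _ n x

lemma vis_add (m n : ℕ) (x : α) :
    vis T C (m+n) x = vis T C m x + vis T C n (T^[m] x) :=
  birkhoffSum_add T _ m n x

lemma measurable_vis (hT : Measurable T) (hC : MeasurableSet C) (n : ℕ) :
    Measurable (fun x => vis T C n x) := by
  simp only [vis, birkhoffSum]
  apply Finset.measurable_sum
  intro k _
  exact (measurable_const.indicator hC).comp (hT.iterate k)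

lemma exists_visit {m1 m2 : ℕ} {x : α} (h : vis T C m1 x < vis T C m2 x) :
    ∃ i, m1 ≤ i ∧ i < m2 ∧ T^[i] x ∈ C := by
  by_contra hcon
  push_neg at hcon
  rcases le_or_gt m1 m2 with hle | hlt
  · have : vis T C m2 x = vis T C m1 x := by
      have := vis_add (T := T) (C := C) m1 (m2 - m1) x
      rw [Nat.add_sub_cancel' hle] at this
      rw [this]
      have hz : vis T C (m2 - m1) (T^[m1] x) = 0 := by
        rw [vis, birkhoffSum]
        apply Finset.sum_eq_zero
        intro k hk
        rw [Finset.mem_range] at hk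
        rw [← Function.iterate_add_apply]
        exact Set.indicator_of_notMem (hcon (k + m1) (Nat.le_add_left _ _) (by omega)) _
      rw [hz, add_zero]
    linarith
  · have := vis_add (T := T) (C := C) m2 (m1 - m2) x
    rw [Nat.add_sub_cancel' hlt.le] at this
    nlinarith [vis_nonneg (T := T) (C := C) (m1 - m2) (T^[m2] x)]

lemma vis_add_compl (n : ℕ) (x : α) : vis T C n x + vis T Cᶜ n x = n := by
  rw [vis, vis, birkhoffSum, birkhoffSum, ← Finset.sum_add_distrib]
  have : ∀ y : α, C.indicator (fun _ => (1:ℝ)) y + Cᶜ.indicator (fun _ => (1:ℝ)) y = 1 := by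
    intro y; by_cases hy : y ∈ C <;> simp [hy]
  simp [this]

end Aux

section Lim
-- liminf comparison lemma for [0,1]-bounded sequences whose difference tends to 0
lemma liminf_le_liminf_add_eps {u v : ℕ → ℝ} (hu0 : ∀ n, 0 ≤ u n) (hv0 : ∀ n, 0 ≤ v n) (hv1 : ∀ n, v n ≤ 1)
    {ε : ℝ} (hε : 0 < ε) (h : ∀ᶠ n in atTop, u n ≤ v n + ε) :
    liminf u atTop ≤ liminf v atTop + ε := by
  have hbu : IsBoundedUnder (· ≥ ·) atTop u := ⟨0, eventually_map.2 (Eventually.of_forall hu0)⟩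
  have hbv : IsBoundedUnder (· ≤ ·) atTop v := ⟨1, eventually_map.2 (Eventually.of_forall hv1)⟩
  have hcv : IsCoboundedUnder (· ≥ ·) atTop v := hbv.isCoboundedUnder_ge
  have hcv' : IsCoboundedUnder (· ≥ ·) atTop (fun n => v n + ε) := by
    have : IsBoundedUnder (· ≤ ·) atTop (fun n => v n + ε) :=
      ⟨1 + ε, eventually_map.2 (Eventually.of_forall fun n => add_le_add_left (hv1 n) ε)⟩
    exact this.isCoboundedUnder_ge
  calc liminf u atTop ≤ liminf (fun n => v n + ε) atTop := liminf_le_liminf h hbu hcv'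
    _ = liminf v atTop + ε := liminf_add_const atTop v ε hcv ⟨0, eventually_map.2 (Eventually.of_forall hv0)⟩

lemma liminf_eq_of_diff_small {u v : ℕ → ℝ} (hu0 : ∀ n, 0 ≤ u n) (hu1 : ∀ n, u n ≤ 1)
    (hv0 : ∀ n, 0 ≤ v n) (hv1 : ∀ n, v n ≤ 1)
    (h : ∀ ε : ℝ, 0 < ε → ∀ᶠ n in atTop, |u n - v n| ≤ ε) :
    liminf u atTop = liminf v atTop := by
  have h1 : ∀ ε : ℝ, 0 < ε → liminf u atTop ≤ liminf v atTop + ε := fun ε hε =>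
    liminf_le_liminf_add_eps hu0 hv0 hv1 hε <| (h ε hε).mono fun n hn => by
      have := abs_le.1 hn; linarith [this.1, this.2]
  have h2 : ∀ ε : ℝ, 0 < ε → liminf v atTop ≤ liminf u atTop + ε := fun ε hε =>
    liminf_le_liminf_add_eps hv0 hu0 hu1 hε <| (h ε hε).mono fun n hn => by
      have := abs_le.1 hn; linarith [this.1, this.2]
  have := le_of_forall_pos_le_add h1
  have := le_of_forall_pos_le_add h2
  linarith
end Lim

section Int
variable {α : Type*} [MeasurableSpace α] {T : α → α} {μ : MeasureTheory.Measure α}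

lemma lint_vis (hT : MeasurePreserving T μ μ) {C : Set α} (hC : MeasurableSet C) (N : ℕ) :
    ∫⁻ x, ENNReal.ofReal (vis T C N x) ∂μ = N * μ C := by
  have hpt : ∀ x, ENNReal.ofReal (vis T C N x)
      = ∑ k ∈ Finset.range N, C.indicator (fun _ => (1:ℝ≥0∞)) (T^[k] x) := by
    intro x
    rw [vis, birkhoffSum, ENNReal.ofReal_sum_of_nonneg
      (fun k _ => Set.indicator_nonneg (fun _ _ => zero_le_one) _)]
    refine Finset.sum_congr rfl fun k _ => ?_
    by_cases hy : T^[k] x ∈ C <;> simp [hy]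
  simp_rw [hpt]
  rw [lintegral_finset_sum (f := fun k x => C.indicator (fun _ => (1:ℝ≥0∞)) (T^[k] x)) _
    (fun k _ => (measurable_const.indicator hC).comp (hT.measurable.iterate k))]
  have hone : ∀ k, ∫⁻ x, C.indicator (fun _ => (1:ℝ≥0∞)) (T^[k] x) ∂μ = μ C := by
    intro k
    rw [(hT.iterate k).lintegral_comp (measurable_const.indicator hC)]
    exact lintegral_indicator_one hC
  simp [hone, Finset.sum_const, Finset.card_range, nsmul_eq_mul]

end Int

section Inv
variable {α : Type*} [MeasurableSpace α] {T : α → α} {C : Set α}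

lemma avg_nonneg (n : ℕ) (x : α) : 0 ≤ vis T C n x / (n:ℝ) :=
  div_nonneg (vis_nonneg n x) (Nat.cast_nonneg n)

lemma avg_le_one (n : ℕ) (x : α) : vis T C n x / (n:ℝ) ≤ 1 := by
  rcases Nat.eq_zero_or_pos n with rfl | hn
  · simp [vis]
  · rw [div_le_one (by exact_mod_cast hn)]
    exact vis_le n x

lemma liminf_avg_comp (x : α) :
    liminf (fun n => vis T C n (T x) / (n:ℝ)) atTop
      = liminf (fun n => vis T C n x / (n:ℝ)) atTop := by
  have hshift : liminf (fun n : ℕ => vis T C (n+1) x / ((n:ℝ)+1)) atTop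
      = liminf (fun n => vis T C n x / (n:ℝ)) atTop := by
    have := liminf_nat_add (fun n => vis T C n x / (n:ℝ)) 1
    rw [← this]
    congr 1
    funext n
    push_cast
    rfl
  rw [← hshift]
  apply liminf_eq_of_diff_small (fun n => avg_nonneg n (T x)) (fun n => avg_le_one n (T x))
  · intro n
    have := avg_nonneg (T := T) (C := C) (n+1) x
    push_cast at this ⊢
    exact this
  · intro n
    have := avg_le_one (T := T) (C := C) (n+1) x
    push_cast at this ⊢
    exact this
  · intro ε hε
    have h2n : Tendsto (fun n : ℕ => (2:ℝ) / n) atTop (𝓝 0) :=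
      tendsto_const_div_atTop_nhds_zero_nat 2
    filter_upwards [h2n.eventually_le_const hε, eventually_ge_atTop 1] with n h2 hn1
    have hn : (0:ℝ) < n := by exact_mod_cast hn1
    have hn1' : (0:ℝ) < (n:ℝ) + 1 := by linarith
    set V := vis T C n (T x) with hV
    set χ := C.indicator (fun _ => (1:ℝ)) x with hχ
    have hdec : vis T C (n+1) x = χ + V := vis_succ' n x
    have hV0 : 0 ≤ V := vis_nonneg n (T x)
    have hVn : V ≤ (n:ℝ) := vis_le n (T x)
    have hχ0 : 0 ≤ χ := Set.indicator_nonneg (fun _ _ => zero_le_one) x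
    have hχ1 : χ ≤ 1 := by
      rw [hχ]; by_cases hx : x ∈ C <;> simp [hx]
    have heq : V / (n:ℝ) - (χ + V) / ((n:ℝ)+1) = (V - (n:ℝ)*χ) / ((n:ℝ)*((n:ℝ)+1)) := by
      field_simp
      ring
    have habs : |V - (n:ℝ)*χ| ≤ (n:ℝ) := by
      rw [abs_le]
      constructor <;> nlinarith
    calc |V / (n:ℝ) - vis T C (n+1) x / ((n:ℝ)+1)| = |(V - (n:ℝ)*χ) / ((n:ℝ)*((n:ℝ)+1))| := by
          rw [hdec, heq]
      _ = |V - (n:ℝ)*χ| / ((n:ℝ)*((n:ℝ)+1)) := by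
          rw [abs_div, abs_of_pos (mul_pos hn hn1')]
      _ ≤ (n:ℝ) / ((n:ℝ)*((n:ℝ)+1)) := by
          gcongr
      _ ≤ 2 / (n:ℝ) := by
          rw [div_le_div_iff₀ (by positivity) hn]
          nlinarith
      _ ≤ ε := h2
end Inv

section Main
variable {α : Type*} [MeasurableSpace α] {T : α → α} {μ : MeasureTheory.Measure α}

theorem ae_liminf_ge [IsProbabilityMeasure μ] (hE : Ergodic T μ)
    {C : Set α} (hC : MeasurableSet C) :
    ∀ᵐ x ∂μ, (μ C).toReal ≤ liminf (fun n => vis T C n x / (n:ℝ)) atTop := by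
  have hT : Measurable T := hE.toMeasurePreserving.measurable
  set g : α → ℝ := fun x => liminf (fun n => vis T C n x / (n:ℝ)) atTop with hgdef
  have hgmeas : Measurable g :=
    Measurable.liminf fun n => (measurable_vis hT hC n).div_const _
  have hginv : ∀ x, g (T x) = g x := fun x => liminf_avg_comp x
  obtain ⟨ℓ, hℓ⟩ := hE.ae_eq_const_of_ae_eq_comp₀ hgmeas.nullMeasurable
    (Filter.Eventually.of_forall fun x => hginv x)
  haveI : (MeasureTheory.ae μ).NeBot := ae_neBot.2 (IsProbabilityMeasure.ne_zero μ)
  have hbdd : ∀ x, IsBoundedUnder (· ≤ ·) atTop (fun n => vis T C n x / (n:ℝ)) := fun x =>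
    ⟨1, eventually_map.2 (Eventually.of_forall (avg_le_one (T := T) (C := C) · x))⟩
  have hgx0 : ∀ x, 0 ≤ g x := fun x =>
    le_liminf_of_le (hbdd x).isCoboundedUnder_ge
      (Eventually.of_forall fun n => avg_nonneg n x)
  have hgx1 : ∀ x, g x ≤ 1 := fun x =>
    liminf_le_of_le
      ⟨0, eventually_map.2 (Eventually.of_forall (avg_nonneg (T := T) (C := C) · x))⟩
      (fun b hb => by
        obtain ⟨n, hn⟩ := hb.exists
        exact hn.trans (avg_le_one n x))
  obtain ⟨x₀, hx₀⟩ := hℓ.exists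
  simp only [Function.const_apply] at hx₀
  have hℓ0 : 0 ≤ ℓ := by have := hgx0 x₀; rwa [hx₀] at this
  have hℓ1 : ℓ ≤ 1 := by have := hgx1 x₀; rwa [hx₀] at this
  have hgnull : μ {x | g x ≠ ℓ} = 0 := by
    have := ae_iff.1 hℓ
    simpa using this
  have hclaim : (μ C).toReal ≤ ℓ := by
    by_contra hcon
    push_neg at hcon
    set ε : ℝ := ((μ C).toReal - ℓ)/4 with hεdef
    have hε0 : 0 < ε := by simp only [hεdef]; linarith
    have hL0 : 0 ≤ ℓ + ε := by linarith
    set E : ℕ → Set α := fun M => ⋂ n ∈ Set.Icc 1 M, {x | (ℓ+ε) * n ≤ vis T C n x} with hEdef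
    have hEmeas : ∀ M, MeasurableSet (E M) := fun M =>
      MeasurableSet.biInter (Set.to_countable _) fun n _ =>
        measurableSet_le measurable_const (measurable_vis hT hC n)
    have hEanti : Antitone E := fun M M' h =>
      Set.biInter_subset_biInter_left (Set.Icc_subset_Icc_right h)
    have hInull : μ (⋂ M, E M) = 0 := by
      refine measure_mono_null ?_ hgnull
      intro x hx
      have hge : ℓ + ε ≤ g x := by
        apply le_liminf_of_le (hbdd x).isCoboundedUnder_ge
        · filter_upwards [eventually_ge_atTop 1] with n hn1
          have hxn : x ∈ E n := Set.mem_iInter.1 hx n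
          have hxn' : (ℓ+ε) * n ≤ vis T C n x :=
            Set.mem_iInter₂.1 hxn n ⟨hn1, le_refl n⟩
          have hnpos : (0:ℝ) < n := by exact_mod_cast hn1
          rw [le_div_iff₀ hnpos]
          exact hxn'
      simp only [Set.mem_setOf_eq]
      intro hgx
      rw [hgx] at hge
      linarith
    have htend : Tendsto (fun M => μ (E M)) atTop (𝓝 0) := by
      have := tendsto_measure_iInter_atTop (μ := μ) (s := E)
        (fun M => (hEmeas M).nullMeasurableSet) hEanti ⟨0, measure_ne_top μ _⟩
      rw [hInull] at this
      exact this
    obtain ⟨M, hMε, hM1⟩ :=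
      ((htend.eventually_lt_const (ENNReal.ofReal_pos.2 hε0)).and (eventually_ge_atTop 1)).exists
    -- key pointwise inequality
    have hkey : ∀ N x, vis T C N x ≤ (ℓ+ε) * N + vis T (E M) N x + M := by
      intro N
      induction N using Nat.strong_induction_on with
      | _ N ih =>
        intro x
        rcases le_or_gt N M with hNM | hNM
        · have h1 := vis_le (T := T) (C := C) N x
          have h2 := vis_nonneg (T := T) (C := E M) N x
          have h3 : (N:ℝ) ≤ M := by exact_mod_cast hNM
          nlinarith [mul_nonneg hL0 (Nat.cast_nonneg N)]
        · by_cases hx : x ∈ E M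
          · have hN1 : 1 ≤ N := by omega
            have hdecomp : vis T C N x
                = C.indicator (fun _ => (1:ℝ)) x + vis T C (N-1) (T x) := by
              conv_lhs => rw [show N = (N-1)+1 by omega]
              exact vis_succ' _ _
            have hdecompE : vis T (E M) N x = 1 + vis T (E M) (N-1) (T x) := by
              conv_lhs => rw [show N = (N-1)+1 by omega]
              rw [vis_succ']
              simp [Set.indicator_of_mem hx]
            have hih := ih (N-1) (by omega) (T x)
            have hind : C.indicator (fun _ => (1:ℝ)) x ≤ 1 := by
              by_cases hxC : x ∈ C <;> simp [hxC]
            have hcast : ((N-1:ℕ):ℝ) = (N:ℝ) - 1 := by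
              rw [Nat.cast_sub hN1]; simp
            rw [hdecomp, hdecompE]
            rw [hcast] at hih
            nlinarith
          · obtain ⟨t, ht1, htM, htlt⟩ :
                ∃ t, 1 ≤ t ∧ t ≤ M ∧ vis T C t x < (ℓ+ε) * t := by
              by_contra hcon2
              push_neg at hcon2
              exact hx (Set.mem_iInter₂.2 fun n hn => hcon2 n hn.1 hn.2)
            have htN : t < N := by omega
            have hdc : vis T C N x = vis T C t x + vis T C (N-t) (T^[t] x) := by
              conv_lhs => rw [show N = t + (N-t) by omega]
              exact vis_add _ _ _
            have hdcE : vis T (E M) N x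
                = vis T (E M) t x + vis T (E M) (N-t) (T^[t] x) := by
              conv_lhs => rw [show N = t + (N-t) by omega]
              exact vis_add _ _ _
            have hih := ih (N-t) (by omega) (T^[t] x)
            have hcast : ((N-t:ℕ):ℝ) = (N:ℝ) - t := by
              rw [Nat.cast_sub htN.le]
            have hWt := vis_nonneg (T := T) (C := E M) t x
            rw [hdc, hdcE]
            rw [hcast] at hih
            nlinarith
    -- integrate
    have hint : ∀ N : ℕ, (N:ℝ≥0∞) * μ C
        ≤ ENNReal.ofReal ((ℓ+ε)*N) + (N:ℝ≥0∞) * μ (E M) + ENNReal.ofReal M := by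
      intro N
      rw [← lint_vis hE.toMeasurePreserving hC N]
      calc ∫⁻ x, ENNReal.ofReal (vis T C N x) ∂μ
          ≤ ∫⁻ x, (ENNReal.ofReal ((ℓ+ε)*N) + ENNReal.ofReal (vis T (E M) N x)
              + ENNReal.ofReal (M:ℝ)) ∂μ := by
            apply lintegral_mono
            intro x
            calc ENNReal.ofReal (vis T C N x)
                ≤ ENNReal.ofReal ((ℓ+ε)*N + vis T (E M) N x + M) :=
                  ENNReal.ofReal_le_ofReal (hkey N x)
              _ = _ := by
                  rw [ENNReal.ofReal_add (add_nonneg (mul_nonneg hL0 (Nat.cast_nonneg N))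
                      (vis_nonneg _ _)) (Nat.cast_nonneg M),
                    ENNReal.ofReal_add (mul_nonneg hL0 (Nat.cast_nonneg N)) (vis_nonneg _ _)]
        _ = ENNReal.ofReal ((ℓ+ε)*N) + (N:ℝ≥0∞) * μ (E M) + ENNReal.ofReal (M:ℝ) := by
            rw [lintegral_add_right _ measurable_const,
              lintegral_add_left measurable_const, lintegral_const, lintegral_const,
              measure_univ, mul_one, mul_one, lint_vis hE.toMeasurePreserving (hEmeas M) N]
    have hfin : ∀ N : ℕ, (N:ℝ) * (μ C).toReal ≤ (ℓ+ε)*N + ε*N + M := by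
      intro N
      have h2 := hint N
      have h3 : (N:ℝ≥0∞) * μ (E M) ≤ ENNReal.ofReal (ε * N) := by
        calc (N:ℝ≥0∞) * μ (E M) ≤ (N:ℝ≥0∞) * ENNReal.ofReal ε :=
              mul_le_mul_right hMε.le _
          _ = ENNReal.ofReal (ε * N) := by
              rw [← ENNReal.ofReal_natCast N, ← ENNReal.ofReal_mul (Nat.cast_nonneg N),
                mul_comm]
      have hR0 : 0 ≤ (ℓ+ε)*N + ε*N + M :=
        add_nonneg (add_nonneg (mul_nonneg hL0 (Nat.cast_nonneg N))
          (mul_nonneg hε0.le (Nat.cast_nonneg N))) (Nat.cast_nonneg M)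
      have h4 : (N:ℝ≥0∞) * μ C ≤ ENNReal.ofReal ((ℓ+ε)*N + ε*N + M) := by
        calc (N:ℝ≥0∞) * μ C ≤ _ := h2
          _ ≤ ENNReal.ofReal ((ℓ+ε)*N) + ENNReal.ofReal (ε*N) + ENNReal.ofReal (M:ℝ) :=
              add_le_add (add_le_add le_rfl h3) le_rfl
          _ = ENNReal.ofReal ((ℓ+ε)*N + ε*N + M) := by
              rw [← ENNReal.ofReal_add (mul_nonneg hL0 (Nat.cast_nonneg N))
                  (mul_nonneg hε0.le (Nat.cast_nonneg N)),
                ← ENNReal.ofReal_add (add_nonneg (mul_nonneg hL0 (Nat.cast_nonneg N))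
                  (mul_nonneg hε0.le (Nat.cast_nonneg N))) (Nat.cast_nonneg M)]
      have h5 := ENNReal.toReal_mono ENNReal.ofReal_ne_top h4
      rw [ENNReal.toReal_mul, ENNReal.toReal_natCast, ENNReal.toReal_ofReal hR0] at h5
      exact h5
    obtain ⟨N, hN1, hNM⟩ : ∃ N : ℕ, 1 ≤ N ∧ (M:ℝ) ≤ ε * N := by
      obtain ⟨N, hN⟩ := exists_nat_ge ((M:ℝ)/ε)
      refine ⟨max N 1, le_max_right _ _, ?_⟩
      have h1 : (M:ℝ)/ε ≤ (max N 1 : ℕ) := by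
        refine hN.trans ?_
        exact_mod_cast le_max_left N 1
      rw [div_le_iff₀ hε0] at h1
      linarith
    have h6 := hfin N
    have hNpos : (0:ℝ) < N := by exact_mod_cast hN1
    have hcε : (μ C).toReal = ℓ + 4*ε := by simp only [hεdef]; ring
    nlinarith
  filter_upwards [hℓ] with x hx
  have : g x = ℓ := hx
  rw [← this] at hclaim
  exact hclaim

end Main

/-- **Lemma (Guysinsky).** For a homeomorphism `f` of a separable metric space
preserving an ergodic Borel probability measure `μ`, there is a full-measure set `P`
such that for each `x ∈ P` and all `ε, δ > 0` there is `N` such that for every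
`n > N` there is an integer `k` with `n(1+ε) < k < n(1+2ε)` and `dist(x, f^k x) < δ`. -/
theorem guysinsky_return_times
    {X : Type*} [MetricSpace X] [TopologicalSpace.SeparableSpace X]
    [MeasurableSpace X] [BorelSpace X]
    (f : X ≃ₜ X) (μ : Measure X) [IsProbabilityMeasure μ] (hf : Ergodic (⇑f) μ) :
    ∃ P : Set X, μ P = 1 ∧ ∀ x ∈ P, ∀ ε : ℝ, 0 < ε → ∀ δ : ℝ, 0 < δ →
      ∃ N : ℕ, ∀ n : ℕ, N < n → ∃ k : ℕ,
        (n : ℝ) * (1 + ε) < k ∧ (k : ℝ) < n * (1 + 2 * ε) ∧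
        dist x ((⇑f)^[k] x) < δ := by
  set T : X → X := ⇑f with hTdef
  have hne : Nonempty X := by
    rcases isEmpty_or_nonempty X with h | h
    · exfalso
      have h1 : μ Set.univ = 1 := measure_univ
      rw [Set.univ_eq_empty_iff.2 h, measure_empty] at h1
      exact zero_ne_one h1
    · exact h
  obtain ⟨u, hu⟩ := TopologicalSpace.exists_dense_seq X
  set B : ℕ → ℕ → Set X := fun i j => Metric.ball (u i) (1/((j:ℝ)+1)) with hBdef
  have hBmeas : ∀ i j, MeasurableSet (B i j) := fun i j => measurableSet_ball
  set U : Set X := ⋃ i, ⋃ j, ⋃ (_ : μ (B i j) = 0), B i j with hUdef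
  have hU : μ U = 0 :=
    measure_iUnion_null fun i => measure_iUnion_null fun j => measure_iUnion_null fun h => h
  have hGood : ∀ᵐ x ∂μ, (∀ i j : ℕ,
      (μ (B i j)).toReal ≤ liminf (fun n => vis T (B i j) n x / (n:ℝ)) atTop ∧
      (μ (B i j)ᶜ).toReal ≤ liminf (fun n => vis T (B i j)ᶜ n x / (n:ℝ)) atTop) ∧ x ∉ U := by
    refine Eventually.and ?_ ?_
    · rw [ae_all_iff]; intro i; rw [ae_all_iff]; intro j
      exact (ae_liminf_ge hf (hBmeas i j)).and (ae_liminf_ge hf (hBmeas i j).compl)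
    · exact ae_iff.2 (by simpa [not_not] using hU)
  set P : Set X := {x | (∀ i j : ℕ,
      (μ (B i j)).toReal ≤ liminf (fun n => vis T (B i j) n x / (n:ℝ)) atTop ∧
      (μ (B i j)ᶜ).toReal ≤ liminf (fun n => vis T (B i j)ᶜ n x / (n:ℝ)) atTop) ∧ x ∉ U}
    with hPdef
  have hPc : μ Pᶜ = 0 := by
    have := ae_iff.1 hGood
    rw [hPdef, Set.compl_setOf]
    exact this
  refine ⟨P, ?_, ?_⟩
  · have hle := measure_union_le (μ := μ) P Pᶜ
    rw [Set.union_compl_self, measure_univ, hPc, add_zero] at hle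
    exact le_antisymm prob_le_one hle
  · rintro x ⟨hgood, hxU⟩ ε hε δ hδ
    obtain ⟨j, hj⟩ : ∃ j : ℕ, 2/((j:ℝ)+1) < δ := by
      obtain ⟨j, hj⟩ := exists_nat_one_div_lt (half_pos hδ)
      refine ⟨j, ?_⟩
      rw [div_lt_iff₀ (by positivity)]
      rw [div_lt_iff₀ (by positivity)] at hj
      linarith
    have hrpos : (0:ℝ) < 1/((j:ℝ)+1) := by positivity
    obtain ⟨i, hi⟩ : ∃ i, u i ∈ Metric.ball x (1/((j:ℝ)+1)) :=
      hu.exists_mem_open Metric.isOpen_ball ⟨x, Metric.mem_ball_self hrpos⟩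
    have hxB : x ∈ B i j := Metric.mem_ball_comm.1 hi
    have hBpos : 0 < μ (B i j) := by
      rcases eq_or_ne (μ (B i j)) 0 with h0 | h0
      · exact absurd (Set.mem_iUnion.2 ⟨i, Set.mem_iUnion.2 ⟨j, Set.mem_iUnion.2 ⟨h0, hxB⟩⟩⟩)
          hxU
      · exact pos_iff_ne_zero.2 h0
    set c : ℝ := (μ (B i j)).toReal with hcdef
    have hc0 : 0 < c := ENNReal.toReal_pos hBpos.ne' (measure_ne_top μ _)
    have hc1 : c ≤ 1 := by
      rw [hcdef]
      exact ENNReal.toReal_le_of_le_ofReal zero_le_one (by simpa using prob_le_one)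
    have hcompl : (μ (B i j)ᶜ).toReal = 1 - c := by
      rw [measure_compl (hBmeas i j) (measure_ne_top μ _), measure_univ,
        ENNReal.toReal_sub_of_le prob_le_one ENNReal.one_ne_top]
      simp [hcdef]
    obtain ⟨h1, h2⟩ := hgood i j
    rw [hcompl] at h2
    set η : ℝ := c * ε / (2 * (2 + 3*ε)) with hηdef
    have hη0 : 0 < η := by positivity
    have hηc : η < c := by
      rw [hηdef, div_lt_iff₀ (by positivity)]
      nlinarith
    have hbddB : IsBoundedUnder (· ≤ ·) atTop (fun m => vis T (B i j) m x / (m:ℝ)) :=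
      ⟨1, eventually_map.2 (Eventually.of_forall (avg_le_one (T := T) (C := B i j) · x))⟩
    have hbddBc : IsBoundedUnder (· ≤ ·) atTop (fun m => vis T (B i j)ᶜ m x / (m:ℝ)) :=
      ⟨1, eventually_map.2 (Eventually.of_forall (avg_le_one (T := T) (C := (B i j)ᶜ) · x))⟩
    have hlbB : IsBoundedUnder (· ≥ ·) atTop (fun m => vis T (B i j) m x / (m:ℝ)) :=
      ⟨0, eventually_map.2 (Eventually.of_forall (avg_nonneg (T := T) (C := B i j) · x))⟩
    have hlbBc : IsBoundedUnder (· ≥ ·) atTop (fun m => vis T (B i j)ᶜ m x / (m:ℝ)) :=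
      ⟨0, eventually_map.2 (Eventually.of_forall (avg_nonneg (T := T) (C := (B i j)ᶜ) · x))⟩
    have hev1 : ∀ᶠ m in atTop, c - η < vis T (B i j) m x / (m:ℝ) :=
      eventually_lt_of_lt_liminf (lt_of_lt_of_le (by linarith) h1) hlbB
    have hev2' : ∀ᶠ m in atTop, (1-c) - η < vis T (B i j)ᶜ m x / (m:ℝ) :=
      eventually_lt_of_lt_liminf (lt_of_lt_of_le (by linarith) h2) hlbBc
    have hev2 : ∀ᶠ m in atTop, vis T (B i j) m x / (m:ℝ) < c + η := by
      filter_upwards [hev2', eventually_ge_atTop 1] with m hm hm1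
      have hmpos : (0:ℝ) < m := by exact_mod_cast hm1
      have hsum := vis_add_compl (T := T) (C := B i j) m x
      have hlow : ((1-c) - η) * m < vis T (B i j)ᶜ m x := (lt_div_iff₀ hmpos).1 hm
      rw [div_lt_iff₀ hmpos]
      nlinarith
    obtain ⟨M0, hM0⟩ := eventually_atTop.1 (hev1.and hev2)
    set m1 : ℕ → ℕ := fun n => ⌊(n:ℝ)*(1+ε)⌋₊ + 1 with hm1def
    set m2 : ℕ → ℕ := fun n => ⌊(n:ℝ)*(1+2*ε)⌋₊ with hm2def
    have hm1ge : ∀ n, n ≤ m1 n := fun n =>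
      le_trans (Nat.le_floor (by nlinarith [Nat.cast_nonneg (α := ℝ) n])) (Nat.le_succ _)
    have hm2ge : ∀ n, n ≤ m2 n := fun n =>
      Nat.le_floor (by nlinarith [Nat.cast_nonneg (α := ℝ) n])
    have hquant : ∀ᶠ n : ℕ in atTop, (c+η)*((m1 n : ℕ):ℝ) < (c-η)*((m2 n : ℕ):ℝ) := by
      have hD : 0 < (c-η)*(1+2*ε) - (c+η)*(1+ε) := by
        have : (c-η)*(1+2*ε) - (c+η)*(1+ε) = c*ε - η*(2+3*ε) := by ring
        rw [this, hηdef]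
        rw [div_mul_eq_mul_div, lt_sub_iff_add_lt, zero_add, div_lt_iff₀ (by positivity)]
        nlinarith [mul_pos (mul_pos hc0 hε) (show (0:ℝ) < 2+3*ε by linarith)]
      have hev := (tendsto_natCast_atTop_atTop (R := ℝ)).eventually_gt_atTop
        ((2*c) / ((c-η)*(1+2*ε) - (c+η)*(1+ε)))
      filter_upwards [hev] with n hn
      have hn' : 2*c < (n:ℝ) * ((c-η)*(1+2*ε) - (c+η)*(1+ε)) := by
        rw [div_lt_iff₀ hD] at hn
        linarith
      have hf1 : ((m1 n : ℕ):ℝ) ≤ (n:ℝ)*(1+ε) + 1 := by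
        have := Nat.floor_le (show (0:ℝ) ≤ (n:ℝ)*(1+ε) by positivity)
        rw [hm1def]
        push_cast
        linarith
      have hf2 : (n:ℝ)*(1+2*ε) - 1 ≤ ((m2 n : ℕ):ℝ) := by
        have := Nat.sub_one_lt_floor ((n:ℝ)*(1+2*ε))
        rw [hm2def]
        push_cast
        linarith
      have hcη : 0 < c - η := by linarith
      calc (c+η)*((m1 n : ℕ):ℝ) ≤ (c+η)*((n:ℝ)*(1+ε)+1) :=
            mul_le_mul_of_nonneg_left hf1 (by linarith)
        _ < (c-η)*((n:ℝ)*(1+2*ε)-1) := by nlinarith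
        _ ≤ (c-η)*((m2 n : ℕ):ℝ) := mul_le_mul_of_nonneg_left hf2 hcη.le
    obtain ⟨N1, hN1⟩ := eventually_atTop.1 hquant
    refine ⟨max N1 M0, fun n hn => ?_⟩
    have hnN1 : N1 ≤ n := le_of_lt (lt_of_le_of_lt (le_max_left _ _) hn)
    have hnM0 : M0 ≤ n := le_of_lt (lt_of_le_of_lt (le_max_right _ _) hn)
    have hn1 : 1 ≤ n := by omega
    obtain ⟨hb1m1, hb2m1⟩ := hM0 (m1 n) (le_trans hnM0 (hm1ge n))
    obtain ⟨hb1m2, hb2m2⟩ := hM0 (m2 n) (le_trans hnM0 (hm2ge n))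
    have hm1pos : (0:ℝ) < ((m1 n : ℕ):ℝ) := by
      have : 1 ≤ m1 n := le_trans hn1 (hm1ge n)
      exact_mod_cast this
    have hm2pos : (0:ℝ) < ((m2 n : ℕ):ℝ) := by
      have : 1 ≤ m2 n := le_trans hn1 (hm2ge n)
      exact_mod_cast this
    have hvm1 : vis T (B i j) (m1 n) x < (c+η)*((m1 n : ℕ):ℝ) := by
      rw [div_lt_iff₀ hm1pos] at hb2m1
      linarith
    have hvm2 : (c-η)*((m2 n : ℕ):ℝ) < vis T (B i j) (m2 n) x := by
      rw [lt_div_iff₀ hm2pos] at hb1m2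
      linarith
    have hlt : vis T (B i j) (m1 n) x < vis T (B i j) (m2 n) x := by
      have := hN1 n hnN1
      linarith
    obtain ⟨k, hk1, hk2, hkB⟩ := exists_visit hlt
    refine ⟨k, ?_, ?_, ?_⟩
    · have hstep : (n:ℝ)*(1+ε) < ((m1 n : ℕ):ℝ) := by
        have := Nat.lt_floor_add_one ((n:ℝ)*(1+ε))
        rw [hm1def]
        push_cast
        linarith
      calc (n:ℝ)*(1+ε) < ((m1 n : ℕ):ℝ) := hstep
        _ ≤ k := by exact_mod_cast hk1
    · calc (k:ℝ) < ((m2 n : ℕ):ℝ) := by exact_mod_cast hk2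
        _ ≤ (n:ℝ)*(1+2*ε) := by
            rw [hm2def]
            exact Nat.floor_le (by positivity)
    · have hd1 : dist x (u i) < 1/((j:ℝ)+1) := Metric.mem_ball.1 hxB
      have hd2 : dist (T^[k] x) (u i) < 1/((j:ℝ)+1) := Metric.mem_ball.1 hkB
      calc dist x (T^[k] x) ≤ dist x (u i) + dist (u i) (T^[k] x) := dist_triangle _ _ _
        _ = dist x (u i) + dist (T^[k] x) (u i) := by rw [dist_comm (u i)]
        _ < 1/((j:ℝ)+1) + 1/((j:ℝ)+1) := add_lt_add hd1 hd2
        _ = 2/((j:ℝ)+1) := by ring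
        _ < δ := hj
end
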